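/- arXiv:2307.09864 — 5 statements merged into one kernel-verified Lean document; each statement's English description precedes it below -/
import Mathlib

section
/- Let r ≥ 1 be a fixed integer, let Σ_Λ and Γ^F be r × r real symmetric positive definite matrices, and for each integer n ≥ r let Λ_n be a real n × r matrix. Assume lim_{n→∞} ‖ (Λ_nᵀ Λ_n)/n − Σ_Λ ‖ = 0, where ‖·‖ is the spectral (operator) norm. Then for every j ∈ {1,…,r}: liminf_{n→∞} μ_j(Λ_n Γ^F Λ_nᵀ)/n ≥ μ_r(Σ_Λ) · μ_j(Γ^F) > 0 and limsup_{n→∞} μ_j(Λ_n Γ^F Λ_nᵀ)/n ≤ μ_j(Σ_Λ) · μ_1(Γ^F) < ∞, where μ_j(A) denotes the j-th largest eigenvalue of a real symmetric matrix A (eigenvalues counted with multiplicity, sorted in decreasing order). -/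
open Matrix Filter

/-- The spectral (operator) norm of a real matrix, i.e. the operator norm of the
induced linear map between Euclidean spaces. -/
noncomputable def specNorm {m n : ℕ} (A : Matrix (Fin m) (Fin n) ℝ) : ℝ :=
  ‖LinearMap.toContinuousLinearMap (Matrix.toEuclideanLin A)‖

/-- `muNth A j` is the `j`-th largest eigenvalue (1-indexed, counted with multiplicity)
of a real symmetric matrix `A` (junk value `0` if `A` is not symmetric or `j` out of range). -/
noncomputable def muNth {n : ℕ} (A : Matrix (Fin n) (Fin n) ℝ) (j : ℕ) : ℝ :=
  (if hA : A.IsHermitian then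
    (List.ofFn hA.eigenvalues).mergeSort (fun a b => decide (b ≤ a))
  else []).getD (j - 1) 0

noncomputable def quadF {n : ℕ} (A : Matrix (Fin n) (Fin n) ℝ) (x : EuclideanSpace ℝ (Fin n)) : ℝ :=
  inner ℝ x (Matrix.toEuclideanLin A x)

section cf
variable {n r : ℕ} {A : Matrix (Fin n) (Fin n) ℝ}

lemma quadF_eq_sum (hA : A.IsHermitian) (x : EuclideanSpace ℝ (Fin n)) :
    quadF A x = ∑ i, hA.eigenvalues i * (hA.eigenvectorBasis.repr x i)^2 := by
  set b := hA.eigenvectorBasis with hbdef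
  have hb : ∀ i, Matrix.toEuclideanLin A (b i) = hA.eigenvalues i • b i := by
    intro i
    apply (WithLp.equiv 2 (Fin n → ℝ)).injective
    simp only [Matrix.toEuclideanLin_apply, Equiv.apply_symm_apply]
    rw [hA.mulVec_eigenvectorBasis i]
    rfl
  have hrepr : ∀ i, b.repr (Matrix.toEuclideanLin A x) i = hA.eigenvalues i * b.repr x i := by
    intro i
    rw [OrthonormalBasis.repr_apply_apply, OrthonormalBasis.repr_apply_apply]
    have hsym : (Matrix.toEuclideanLin A).IsSymmetric :=
      Matrix.isHermitian_iff_isSymmetric.mp hA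
    calc (inner ℝ (b i) (Matrix.toEuclideanLin A x) : ℝ)
        = inner ℝ (Matrix.toEuclideanLin A (b i)) x := (hsym (b i) x).symm
      _ = inner ℝ (hA.eigenvalues i • b i) x := by rw [hb i]
      _ = hA.eigenvalues i * inner ℝ (b i) x := real_inner_smul_left _ _ _
  have key : quadF A x = inner ℝ (b.repr x) (b.repr (Matrix.toEuclideanLin A x)) := by
    rw [quadF, b.repr.inner_map_map]
  rw [key, PiLp.inner_apply]
  refine Finset.sum_congr rfl fun i _ => ?_
  rw [hrepr i]
  simp [RCLike.inner_apply]
  ring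

lemma norm_sq_eq_sum (b : OrthonormalBasis (Fin n) ℝ (EuclideanSpace ℝ (Fin n)))
    (x : EuclideanSpace ℝ (Fin n)) : ‖x‖^2 = ∑ i, (b.repr x i)^2 := by
  rw [← real_inner_self_eq_norm_sq, ← b.repr.inner_map_map x x, PiLp.inner_apply]
  refine Finset.sum_congr rfl fun i _ => ?_
  simp [RCLike.inner_apply]

lemma span_eigen_finrank (hA : A.IsHermitian) (S : Finset (Fin n)) :
    Module.finrank ℝ (Submodule.span ℝ (⇑hA.eigenvectorBasis '' ↑S)) = S.card := by
  set b := hA.eigenvectorBasis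
  have himg : ⇑b '' ↑S = Set.range (fun i : {x // x ∈ S} => b i) :=
    Set.image_eq_range _ _
  have hli : LinearIndependent ℝ (fun i : {x // x ∈ S} => b i) :=
    b.orthonormal.linearIndependent.comp _ Subtype.coe_injective
  rw [himg, finrank_span_eq_card hli, Fintype.card_coe]

lemma repr_zero_of_mem_span (hA : A.IsHermitian) (S : Finset (Fin n))
    {x : EuclideanSpace ℝ (Fin n)}
    (hx : x ∈ Submodule.span ℝ (⇑hA.eigenvectorBasis '' ↑S)) :
    ∀ i ∉ S, hA.eigenvectorBasis.repr x i = 0 := by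
  intro i hi
  set b := hA.eigenvectorBasis
  have hx' : x ∈ Submodule.span ℝ (⇑b.toBasis '' ↑S) := by
    rwa [b.coe_toBasis]
  have hsupp := (Module.Basis.mem_span_image b.toBasis).mp hx'
  have : i ∉ (b.toBasis.repr x).support := fun h => hi (hsupp h)
  have h0 : b.toBasis.repr x i = 0 := Finsupp.notMem_support_iff.mp this
  rwa [b.coe_toBasis_repr_apply] at h0

lemma countP_ofFn (f : Fin n → ℝ) (p : ℝ → Prop) [DecidablePred p] :
    (List.ofFn f).countP (fun x => decide (p x)) = (Finset.univ.filter (fun i => p (f i))).card := by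
  calc (List.ofFn f).countP (fun x => decide (p x))
      = (List.finRange n).countP (fun b => decide (p (f b))) := by
        rw [List.ofFn_eq_map, List.countP_map]; rfl
    _ = Multiset.countP (fun i => p (f i)) ↑(List.finRange n) := (Multiset.coe_countP _ _).symm
    _ = Multiset.countP (fun i => p (f i)) (Finset.univ.val) := rfl
    _ = (Finset.univ.filter (fun i => p (f i))).card := by
        rw [Multiset.countP_eq_card_filter, ← Finset.filter_val]; rfl

lemma muNth_eq' (hA : A.IsHermitian) (k : ℕ) :
    muNth A (k+1) = ((List.ofFn hA.eigenvalues).mergeSort (fun a b => decide (b ≤ a))).getD k 0 := by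
  rw [muNth, dif_pos hA]; rfl

lemma sorted_facts (hA : A.IsHermitian) :
    ((List.ofFn hA.eigenvalues).mergeSort (fun a b => decide (b ≤ a))).Pairwise (fun a b => b ≤ a) := by
  have := List.pairwise_mergeSort (le := fun a b : ℝ => decide (b ≤ a))
    (by intro a b c; simpa using fun h1 h2 => h2.trans h1)
    (by intro a b; simpa using le_total b a) (List.ofFn hA.eigenvalues)
  simpa using this

lemma exists_card_ge (hA : A.IsHermitian) {k : ℕ} (hk : k < n) :
    ∃ S : Finset (Fin n), S.card = k + 1 ∧ ∀ i ∈ S, muNth A (k+1) ≤ hA.eigenvalues i := by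
  set L := (List.ofFn hA.eigenvalues).mergeSort (fun a b => decide (b ≤ a)) with hL
  have hlen : L.length = n := by simp [hL]
  have hperm : L.Perm (List.ofFn hA.eigenvalues) := List.mergeSort_perm _ _
  have hsort : L.Pairwise (fun a b => b ≤ a) := sorted_facts hA
  set m := muNth A (k+1) with hm
  have hmval : m = L[k]'(by omega) := by
    rw [hm, muNth_eq' hA k, ← hL, List.getD_eq_getElem _ _ (by omega)]
  have hcount : k + 1 ≤ L.countP (fun x => decide (m ≤ x)) := by
    have hg : ∀ i (h : i < k + 1), m ≤ L[i]'(by omega) := by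
      intro i h
      rcases eq_or_lt_of_le (Nat.lt_succ_iff.mp h) with h' | h'
      · subst h'; rw [hmval]
      · rw [hmval]
        exact List.pairwise_iff_getElem.mp hsort i k (by omega) (by omega) h'
    calc k + 1 = ((L.take (k+1)).countP (fun x => decide (m ≤ x))) := by
          rw [List.countP_eq_length.mpr, List.length_take]
          · omega
          · intro a ha
            rw [List.mem_take_iff_getElem] at ha
            obtain ⟨i, hi, rfl⟩ := ha
            exact decide_eq_true (hg i (by omega))
      _ ≤ _ := by
          conv_rhs => rw [← List.take_append_drop (k+1) L]
          rw [List.countP_append]; omega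
  rw [hperm.countP_eq, countP_ofFn] at hcount
  obtain ⟨S, hS, hcard⟩ := Finset.exists_subset_card_eq hcount
  exact ⟨S, hcard, fun i hi => (Finset.mem_filter.mp (hS hi)).2⟩

lemma exists_card_le (hA : A.IsHermitian) {k : ℕ} (hk : k < n) :
    ∃ S : Finset (Fin n), S.card = n - k ∧ ∀ i ∈ S, hA.eigenvalues i ≤ muNth A (k+1) := by
  set L := (List.ofFn hA.eigenvalues).mergeSort (fun a b => decide (b ≤ a)) with hL
  have hlen : L.length = n := by simp [hL]
  have hperm : L.Perm (List.ofFn hA.eigenvalues) := List.mergeSort_perm _ _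
  have hsort : L.Pairwise (fun a b => b ≤ a) := sorted_facts hA
  set m := muNth A (k+1) with hm
  have hmval : m = L[k]'(by omega) := by
    rw [hm, muNth_eq' hA k, ← hL, List.getD_eq_getElem _ _ (by omega)]
  have hcount : n - k ≤ L.countP (fun x => decide (x ≤ m)) := by
    have hg : ∀ i (hik : k ≤ i) (h : i < n), L[i]'(by omega) ≤ m := by
      intro i hik h
      rcases eq_or_lt_of_le hik with h' | h'
      · subst h'; rw [hmval]
      · rw [hmval]
        exact List.pairwise_iff_getElem.mp hsort k i (by omega) (by omega) h'
    calc n - k = ((L.drop k).countP (fun x => decide (x ≤ m))) := by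
          rw [List.countP_eq_length.mpr, List.length_drop, hlen]
          intro a ha
          rw [List.mem_iff_getElem] at ha
          obtain ⟨i, hi, rfl⟩ := ha
          rw [List.getElem_drop]
          refine decide_eq_true (hg (k+i) (by omega) ?_)
          rw [List.length_drop, hlen] at hi; omega
      _ ≤ _ := by
          conv_rhs => rw [← List.take_append_drop k L]
          rw [List.countP_append]; omega
  rw [hperm.countP_eq, countP_ofFn] at hcount
  obtain ⟨S, hS, hcard⟩ := Finset.exists_subset_card_eq hcount
  exact ⟨S, hcard, fun i hi => (Finset.mem_filter.mp (hS hi)).2⟩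

lemma muNth_eq_eigenvalue (hA : A.IsHermitian) {k : ℕ} (hk : k < n) :
    ∃ i, muNth A (k+1) = hA.eigenvalues i := by
  set L := (List.ofFn hA.eigenvalues).mergeSort (fun a b => decide (b ≤ a)) with hL
  have hlen : L.length = n := by simp [hL]
  have hperm : L.Perm (List.ofFn hA.eigenvalues) := List.mergeSort_perm _ _
  have hmval : muNth A (k+1) = L[k]'(by omega) := by
    rw [muNth_eq' hA k, ← hL, List.getD_eq_getElem _ _ (by omega)]
  have hmem : L[k]'(by omega) ∈ List.ofFn hA.eigenvalues :=
    hperm.mem_iff.mp (List.getElem_mem _)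
  obtain ⟨i, hi⟩ := List.mem_ofFn.mp hmem
  exact ⟨i, by rw [hmval, ← hi]⟩

/-- Courant–Fischer, lower half. -/
lemma cf_low (hA : A.IsHermitian) {k : ℕ} (hk : k < n) :
    ∃ V : Submodule ℝ (EuclideanSpace ℝ (Fin n)), Module.finrank ℝ V = k + 1 ∧
      ∀ x ∈ V, muNth A (k+1) * ‖x‖^2 ≤ quadF A x := by
  obtain ⟨S, hcard, hS⟩ := exists_card_ge hA hk
  refine ⟨Submodule.span ℝ (⇑hA.eigenvectorBasis '' ↑S), by rw [span_eigen_finrank hA S, hcard],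
    fun x hx => ?_⟩
  have hsupp := repr_zero_of_mem_span hA S hx
  rw [quadF_eq_sum hA, norm_sq_eq_sum hA.eigenvectorBasis, Finset.mul_sum]
  refine Finset.sum_le_sum fun i _ => ?_
  by_cases hi : i ∈ S
  · exact mul_le_mul_of_nonneg_right (hS i hi) (sq_nonneg _)
  · rw [hsupp i hi]; simp

/-- Courant–Fischer, upper half. -/
lemma cf_high (hA : A.IsHermitian) {k : ℕ} (hk : k < n)
    (V : Submodule ℝ (EuclideanSpace ℝ (Fin n))) (hV : Module.finrank ℝ V = k + 1) :
    ∃ x ∈ V, x ≠ 0 ∧ quadF A x ≤ muNth A (k+1) * ‖x‖^2 := by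
  obtain ⟨S, hcard, hS⟩ := exists_card_le hA hk
  set W := Submodule.span ℝ (⇑hA.eigenvectorBasis '' ↑S) with hW
  have hWrank : Module.finrank ℝ W = n - k := by rw [hW, span_eigen_finrank hA S, hcard]
  have hsum := Submodule.finrank_sup_add_finrank_inf_eq V W
  have hle : Module.finrank ℝ ↥(V ⊔ W) ≤ n := by
    have := Submodule.finrank_le (V ⊔ W)
    simpa [finrank_euclideanSpace_fin] using this
  have hpos : 0 < Module.finrank ℝ ↥(V ⊓ W) := by omega
  have : Nontrivial ↥(V ⊓ W) := Module.finrank_pos_iff.mp hpos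
  obtain ⟨x, hx⟩ := exists_ne (0 : ↥(V ⊓ W))
  have hxV : (x : EuclideanSpace ℝ (Fin n)) ∈ V := (Submodule.mem_inf.mp x.2).1
  have hxW : (x : EuclideanSpace ℝ (Fin n)) ∈ W := (Submodule.mem_inf.mp x.2).2
  refine ⟨x, hxV, by simpa [Submodule.coe_eq_zero] using hx, ?_⟩
  have hsupp := repr_zero_of_mem_span hA S hxW
  rw [quadF_eq_sum hA, norm_sq_eq_sum hA.eigenvectorBasis, Finset.mul_sum]
  refine Finset.sum_le_sum fun i _ => ?_
  by_cases hi : i ∈ S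
  · exact mul_le_mul_of_nonneg_right (hS i hi) (sq_nonneg _)
  · rw [hsupp i hi]; simp

lemma le_muNth (hA : A.IsHermitian) {k : ℕ} (hk : k < n) {m : ℝ}
    (V : Submodule ℝ (EuclideanSpace ℝ (Fin n))) (hV : Module.finrank ℝ V = k + 1)
    (h : ∀ x ∈ V, m * ‖x‖^2 ≤ quadF A x) : m ≤ muNth A (k+1) := by
  obtain ⟨x, hxV, hx0, hq⟩ := cf_high hA hk V hV
  have h1 := h x hxV
  have hx2 : (0:ℝ) < ‖x‖^2 := by
    have := norm_pos_iff.mpr hx0; positivity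
  nlinarith

lemma muNth_le (hA : A.IsHermitian) {k : ℕ} (hk : k < n) {m : ℝ}
    (h : ∀ V : Submodule ℝ (EuclideanSpace ℝ (Fin n)), Module.finrank ℝ V = k + 1 →
      ∃ x ∈ V, x ≠ 0 ∧ quadF A x ≤ m * ‖x‖^2) : muNth A (k+1) ≤ m := by
  obtain ⟨V, hV, hbound⟩ := cf_low hA hk
  obtain ⟨x, hxV, hx0, hq⟩ := h V hV
  have h1 := hbound x hxV
  have hx2 : (0:ℝ) < ‖x‖^2 := by
    have := norm_pos_iff.mpr hx0; positivity
  nlinarith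

lemma muNth_mono (hA : A.IsHermitian) {D : Matrix (Fin n) (Fin n) ℝ} (hD : D.IsHermitian)
    {k : ℕ} (hk : k < n) (h : ∀ x, quadF A x ≤ quadF D x) :
    muNth A (k+1) ≤ muNth D (k+1) := by
  refine muNth_le hA hk fun V hV => ?_
  obtain ⟨x, hxV, hx0, hq⟩ := cf_high hD hk V hV
  exact ⟨x, hxV, hx0, le_trans (h x) hq⟩

end cf

section quad2
variable {n r m : ℕ}

lemma toEuclideanLin_mul_apply (M : Matrix (Fin m) (Fin n) ℝ) (N : Matrix (Fin n) (Fin r) ℝ)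
    (x : EuclideanSpace ℝ (Fin r)) :
    Matrix.toEuclideanLin (M * N) x = Matrix.toEuclideanLin M (Matrix.toEuclideanLin N x) := by
  simp [Matrix.toEuclideanLin_apply, Matrix.mulVec_mulVec]

lemma inner_toEuclideanLin_transpose (M : Matrix (Fin n) (Fin r) ℝ)
    (x : EuclideanSpace ℝ (Fin n)) (y : EuclideanSpace ℝ (Fin r)) :
    (inner ℝ (Matrix.toEuclideanLin Mᵀ x) y : ℝ) = inner ℝ x (Matrix.toEuclideanLin M y) := by
  simp only [Matrix.toEuclideanLin_apply, PiLp.inner_apply, RCLike.inner_apply, conj_trivial]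
  change y.ofLp ⬝ᵥ (Mᵀ *ᵥ x.ofLp) = (M *ᵥ y.ofLp) ⬝ᵥ x.ofLp
  rw [Matrix.dotProduct_mulVec, Matrix.vecMul_transpose]

lemma quadF_mul_transpose (M : Matrix (Fin n) (Fin r) ℝ) (x : EuclideanSpace ℝ (Fin n)) :
    quadF (M * Mᵀ) x = ‖Matrix.toEuclideanLin Mᵀ x‖^2 := by
  rw [quadF, toEuclideanLin_mul_apply, ← inner_toEuclideanLin_transpose,
    real_inner_self_eq_norm_sq]

lemma quadF_transpose_mul (M : Matrix (Fin n) (Fin r) ℝ) (y : EuclideanSpace ℝ (Fin r)) :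
    quadF (Mᵀ * M) y = ‖Matrix.toEuclideanLin M y‖^2 := by
  rw [quadF, show Mᵀ * M = Mᵀ * (Mᵀ)ᵀ by rw [Matrix.transpose_transpose],
    toEuclideanLin_mul_apply, ← inner_toEuclideanLin_transpose]
  rw [Matrix.transpose_transpose, real_inner_self_eq_norm_sq]

lemma quadF_smul (c : ℝ) (A : Matrix (Fin n) (Fin n) ℝ) (x : EuclideanSpace ℝ (Fin n)) :
    quadF (c • A) x = c * quadF A x := by
  rw [quadF, quadF, show Matrix.toEuclideanLin (c • A) = c • Matrix.toEuclideanLin A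
    from _root_.map_smul _ c A, LinearMap.smul_apply, real_inner_smul_right]

lemma quadF_conj (B A : Matrix (Fin n) (Fin n) ℝ) (hB : Bᵀ = B) (x : EuclideanSpace ℝ (Fin n)) :
    quadF (B * A * B) x = quadF A (Matrix.toEuclideanLin B x) := by
  rw [quadF, quadF, toEuclideanLin_mul_apply, toEuclideanLin_mul_apply,
    ← inner_toEuclideanLin_transpose B x, hB]

lemma quadF_sub (A B : Matrix (Fin n) (Fin n) ℝ) (x : EuclideanSpace ℝ (Fin n)) :
    quadF (A - B) x = quadF A x - quadF B x := by
  rw [quadF, quadF, quadF, map_sub, LinearMap.sub_apply, inner_sub_right]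

lemma conjTranspose_eq_transpose (M : Matrix (Fin n) (Fin r) ℝ) : Mᴴ = Mᵀ := by
  ext i j; simp [Matrix.conjTranspose_apply]

lemma isHermitian_smul_real (c : ℝ) {A : Matrix (Fin n) (Fin n) ℝ} (hA : A.IsHermitian) :
    (c • A).IsHermitian := by
  rw [Matrix.IsHermitian, Matrix.conjTranspose_smul, hA.eq]
  simp

lemma isHermitian_conj_real {B A : Matrix (Fin n) (Fin n) ℝ} (hB : B.IsHermitian)
    (hA : A.IsHermitian) : (B * A * B).IsHermitian := by
  rw [Matrix.IsHermitian, Matrix.conjTranspose_mul, Matrix.conjTranspose_mul, hA.eq, hB.eq,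
    Matrix.mul_assoc]

lemma isHermitian_mul_transpose_self (M : Matrix (Fin n) (Fin r) ℝ) :
    (M * Mᵀ).IsHermitian := by
  rw [← conjTranspose_eq_transpose]; exact Matrix.isHermitian_mul_conjTranspose_self M

lemma posSemidef_mul_transpose_self (M : Matrix (Fin n) (Fin r) ℝ) :
    (M * Mᵀ).PosSemidef := by
  rw [← conjTranspose_eq_transpose]; exact Matrix.posSemidef_self_mul_conjTranspose M

lemma muNth_smul {A : Matrix (Fin n) (Fin n) ℝ} (hA : A.IsHermitian) {c : ℝ} (hc : 0 < c)
    {k : ℕ} (hk : k < n) : muNth (c • A) (k+1) = c * muNth A (k+1) := by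
  have hcA := isHermitian_smul_real c hA
  refine le_antisymm ?_ ?_
  · refine muNth_le hcA hk fun V hV => ?_
    obtain ⟨x, hxV, hx0, hq⟩ := cf_high hA hk V hV
    refine ⟨x, hxV, hx0, ?_⟩
    rw [quadF_smul]
    nlinarith
  · obtain ⟨V, hV, hbound⟩ := cf_low hA hk
    refine le_muNth hcA hk V hV fun x hx => ?_
    have := hbound x hx
    rw [quadF_smul]
    nlinarith

lemma muNth_nonneg {A : Matrix (Fin n) (Fin n) ℝ} (hP : A.PosSemidef) {k : ℕ} (hk : k < n) :
    0 ≤ muNth A (k+1) := by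
  obtain ⟨i, hi⟩ := muNth_eq_eigenvalue hP.isHermitian hk
  rw [hi]; exact hP.eigenvalues_nonneg i

lemma muNth_pos {A : Matrix (Fin n) (Fin n) ℝ} (hP : A.PosDef) {k : ℕ} (hk : k < n) :
    0 < muNth A (k+1) := by
  obtain ⟨i, hi⟩ := muNth_eq_eigenvalue hP.isHermitian hk
  rw [hi]; exact hP.eigenvalues_pos i

lemma finrank_map_eq_of_injOn {E₁ E₂ : Type*} [AddCommGroup E₁] [Module ℝ E₁]
    [AddCommGroup E₂] [Module ℝ E₂] (f : E₁ →ₗ[ℝ] E₂) (V : Submodule ℝ E₁)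
    (h : ∀ x ∈ V, f x = 0 → x = 0) :
    Module.finrank ℝ (V.map f) = Module.finrank ℝ V := by
  have hinj : Function.Injective (f.domRestrict V) := by
    intro a b hab
    have h1 : f ((a : E₁) - b) = 0 := by
      rw [map_sub, sub_eq_zero]
      exact hab
    exact Subtype.ext (sub_eq_zero.mp (h _ (V.sub_mem a.2 b.2) h1))
  rw [← LinearMap.range_domRestrict, LinearMap.finrank_range_of_inj hinj]

/-- key transfer: `M Mᵀ` and `Mᵀ M` have the same `k`-th top eigenvalue. -/
lemma muNth_mul_transpose_comm (M : Matrix (Fin n) (Fin r) ℝ) {k : ℕ}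
    (hkr : k < r) (hkn : k < n) :
    muNth (M * Mᵀ) (k+1) = muNth (Mᵀ * M) (k+1) := by
  have hMMt := isHermitian_mul_transpose_self M
  have hMtM : (Mᵀ * M).IsHermitian := by
    have := isHermitian_mul_transpose_self Mᵀ
    rwa [Matrix.transpose_transpose] at this
  have hPSD1 := posSemidef_mul_transpose_self M
  have hPSD2 : (Mᵀ * M).PosSemidef := by
    have := posSemidef_mul_transpose_self Mᵀ
    rwa [Matrix.transpose_transpose] at this
  have hμ2 : 0 ≤ muNth (Mᵀ * M) (k+1) := muNth_nonneg hPSD2 hkr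
  set μ := muNth (Mᵀ * M) (k+1) with hμ
  refine le_antisymm ?_ ?_
  · -- muNth (M Mᵀ) ≤ μ
    refine muNth_le hMMt hkn fun V hV => ?_
    by_cases hker : ∃ x ∈ V, x ≠ 0 ∧ Matrix.toEuclideanLin Mᵀ x = 0
    · obtain ⟨x, hxV, hx0, hx⟩ := hker
      refine ⟨x, hxV, hx0, ?_⟩
      rw [quadF_mul_transpose, hx]
      have : (0:ℝ) ≤ μ * ‖x‖^2 := mul_nonneg hμ2 (sq_nonneg _)
      simpa using this
    · push_neg at hker
      have hinj : ∀ x ∈ V, Matrix.toEuclideanLin Mᵀ x = 0 → x = 0 := by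
        intro x hx h0
        by_contra hne
        exact (hker x hx hne) h0
      set W := V.map (Matrix.toEuclideanLin Mᵀ) with hWdef
      have hWrank : Module.finrank ℝ W = k + 1 := by
        rw [hWdef, finrank_map_eq_of_injOn _ V hinj, hV]
      obtain ⟨y, hyW, hy0, hyq⟩ := cf_high hMtM hkr W hWrank
      obtain ⟨x, hxV, hxy⟩ := Submodule.mem_map.mp hyW
      have hx0 : x ≠ 0 := by
        intro h; rw [h] at hxy; simp at hxy; exact hy0 hxy.symm
      refine ⟨x, hxV, hx0, ?_⟩
      -- let a = ‖x‖, b = ‖Mᵀ x‖, c = ‖M Mᵀ x‖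
      have hb : quadF (M * Mᵀ) x = ‖Matrix.toEuclideanLin Mᵀ x‖^2 := quadF_mul_transpose M x
      have hcs : ‖Matrix.toEuclideanLin Mᵀ x‖^2 ≤
          ‖x‖ * ‖Matrix.toEuclideanLin M (Matrix.toEuclideanLin Mᵀ x)‖ := by
        rw [← hb, quadF]
        calc (inner ℝ x (Matrix.toEuclideanLin (M * Mᵀ) x) : ℝ)
            ≤ ‖x‖ * ‖Matrix.toEuclideanLin (M * Mᵀ) x‖ := real_inner_le_norm _ _
          _ = _ := by rw [toEuclideanLin_mul_apply]
      have hyq' : ‖Matrix.toEuclideanLin M (Matrix.toEuclideanLin Mᵀ x)‖^2 ≤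
          μ * ‖Matrix.toEuclideanLin Mᵀ x‖^2 := by
        have h := hyq
        rw [quadF_transpose_mul] at h
        rw [← hxy] at h
        exact h
      rw [hb]
      set a := ‖x‖
      set b := ‖Matrix.toEuclideanLin Mᵀ x‖ with hbdef
      set c := ‖Matrix.toEuclideanLin M (Matrix.toEuclideanLin Mᵀ x)‖
      have hb0 : 0 < b := by
        rw [hbdef]
        refine norm_pos_iff.mpr ?_
        rw [hxy]; exact hy0
      have ha0 : 0 ≤ a := norm_nonneg _
      have hc0 : 0 ≤ c := norm_nonneg _
      -- b² ≤ a c, c² ≤ μ b² ⊢ b² ≤ μ a²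
      have e1 : b^2 * b^2 ≤ (a*c) * (a*c) :=
        mul_le_mul hcs hcs (sq_nonneg b) (mul_nonneg ha0 hc0)
      have e2 : a^2 * c^2 ≤ a^2 * (μ * b^2) := mul_le_mul_of_nonneg_left hyq' (sq_nonneg a)
      nlinarith [mul_pos hb0 hb0, e1, e2]
  · -- μ ≤ muNth (M Mᵀ)
    rcases hμ2.eq_or_lt with hzero | hposμ
    · obtain ⟨V, hV, hbound⟩ := cf_low hMMt hkn
      refine le_muNth hMMt hkn V hV fun x hx => ?_
      rw [← hzero, quadF_mul_transpose]
      simpa using sq_nonneg ‖Matrix.toEuclideanLin Mᵀ x‖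
    · obtain ⟨V₀, hV₀, hbound⟩ := cf_low hMtM hkr
      have hinj : ∀ y ∈ V₀, Matrix.toEuclideanLin M y = 0 → y = 0 := by
        intro y hy h0
        have h1 := hbound y hy
        rw [quadF_transpose_mul, h0] at h1
        simp at h1
        have : ‖y‖^2 ≤ 0 := by nlinarith
        have : ‖y‖ = 0 := by nlinarith [sq_nonneg ‖y‖, norm_nonneg y]
        exact norm_eq_zero.mp this
      set V := V₀.map (Matrix.toEuclideanLin M) with hVdef
      have hVrank : Module.finrank ℝ V = k + 1 := by
        rw [hVdef, finrank_map_eq_of_injOn _ V₀ hinj, hV₀]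
      refine le_muNth hMMt hkn V hVrank fun x hx => ?_
      obtain ⟨y, hyV₀, hyx⟩ := Submodule.mem_map.mp hx
      have h1 : μ * ‖y‖^2 ≤ ‖Matrix.toEuclideanLin M y‖^2 := by
        have := hbound y hyV₀
        rwa [quadF_transpose_mul] at this
      have hcs : ‖Matrix.toEuclideanLin M y‖^2 ≤
          ‖y‖ * ‖Matrix.toEuclideanLin Mᵀ (Matrix.toEuclideanLin M y)‖ := by
        rw [← quadF_transpose_mul, quadF]
        calc (inner ℝ y (Matrix.toEuclideanLin (Mᵀ * M) y) : ℝ)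
            ≤ ‖y‖ * ‖Matrix.toEuclideanLin (Mᵀ * M) y‖ := real_inner_le_norm _ _
          _ = _ := by rw [toEuclideanLin_mul_apply]
      rw [quadF_mul_transpose, ← hyx]
      set a := ‖y‖ with hadef
      set c := ‖Matrix.toEuclideanLin Mᵀ (Matrix.toEuclideanLin M y)‖ with hcdef
      set b := ‖Matrix.toEuclideanLin M y‖ with hbdef
      -- h1 : μ a² ≤ b² ; hcs : b² ≤ a c ; goal : μ b² ≤ c²
      have ha0 : 0 ≤ a := norm_nonneg _
      have hc0 : 0 ≤ c := norm_nonneg _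
      have hb0 : 0 ≤ b := norm_nonneg _
      by_cases hb : b = 0
      · rw [hb]
        simpa using sq_nonneg c

      · have hbpos : 0 < b := lt_of_le_of_ne hb0 (Ne.symm hb)
        have e1 : b^2 * b^2 ≤ (a*c) * (a*c) :=
          mul_le_mul hcs hcs (sq_nonneg b) (mul_nonneg ha0 hc0)
        have e2 : μ * a^2 * c^2 ≤ b^2 * c^2 := mul_le_mul_of_nonneg_right h1 (sq_nonneg c)
        nlinarith [mul_pos hbpos hbpos, e1, e2, hposμ.le]
end quad2

section spec
variable {n r m : ℕ}

lemma norm_toEuclideanLin_le (A : Matrix (Fin m) (Fin n) ℝ) (x : EuclideanSpace ℝ (Fin n)) :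
    ‖Matrix.toEuclideanLin A x‖ ≤ specNorm A * ‖x‖ := by
  have := (LinearMap.toContinuousLinearMap (Matrix.toEuclideanLin A)).le_opNorm x
  simpa [specNorm] using this

lemma specNorm_nonneg (A : Matrix (Fin m) (Fin n) ℝ) : 0 ≤ specNorm A := norm_nonneg _

lemma quadF_le_specNorm (A : Matrix (Fin n) (Fin n) ℝ) (x : EuclideanSpace ℝ (Fin n)) :
    quadF A x ≤ specNorm A * ‖x‖^2 := by
  calc quadF A x ≤ ‖x‖ * ‖Matrix.toEuclideanLin A x‖ := real_inner_le_norm _ _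
    _ ≤ ‖x‖ * (specNorm A * ‖x‖) :=
        mul_le_mul_of_nonneg_left (norm_toEuclideanLin_le A x) (norm_nonneg _)
    _ = specNorm A * ‖x‖^2 := by ring

lemma specNorm_sub_comm (A B : Matrix (Fin n) (Fin n) ℝ) :
    specNorm (A - B) = specNorm (B - A) := by
  rw [specNorm, specNorm, show B - A = -(A - B) by abel, map_neg, map_neg, norm_neg]

/-- Weyl-type perturbation bound. -/
lemma muNth_le_muNth_add_specNorm {A B : Matrix (Fin n) (Fin n) ℝ}
    (hA : A.IsHermitian) (hB : B.IsHermitian) {k : ℕ} (hk : k < n) :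
    muNth A (k+1) ≤ muNth B (k+1) + specNorm (A - B) := by
  refine muNth_le hA hk fun V hV => ?_
  obtain ⟨x, hxV, hx0, hq⟩ := cf_high hB hk V hV
  refine ⟨x, hxV, hx0, ?_⟩
  have h1 : quadF A x = quadF B x + quadF (A - B) x := by rw [quadF_sub]; ring
  have h2 := quadF_le_specNorm (A - B) x
  rw [h1]
  nlinarith [sq_nonneg ‖x‖]

lemma quadF_le_muNth_one {A : Matrix (Fin n) (Fin n) ℝ} (hA : A.IsHermitian) (hn : 0 < n)
    (x : EuclideanSpace ℝ (Fin n)) : quadF A x ≤ muNth A 1 * ‖x‖^2 := by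
  by_cases hx : x = 0
  · simp [hx, quadF]
  · obtain ⟨y, hyV, hy0, hq⟩ := cf_high hA (k := 0) hn (ℝ ∙ x) (finrank_span_singleton hx)
    obtain ⟨c, rfl⟩ := Submodule.mem_span_singleton.mp hyV
    have hc : c ≠ 0 := by rintro rfl; simp at hy0
    have hql : quadF A (c • x) = c^2 * quadF A x := by
      rw [quadF, quadF, _root_.map_smul, real_inner_smul_left, real_inner_smul_right]; ring
    have hn2 : ‖c • x‖^2 = c^2 * ‖x‖^2 := by
      rw [norm_smul]; simp [Real.norm_eq_abs, mul_pow, sq_abs]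
    have hc2 : (0:ℝ) < c^2 := by positivity
    have hq' : c^2 * quadF A x ≤ muNth A 1 * (c^2 * ‖x‖^2) := by
      rw [← hql, ← hn2]; simpa using hq
    nlinarith

lemma muNth_last_le_quad {A : Matrix (Fin n) (Fin n) ℝ} (hA : A.IsHermitian) (hn : 0 < n)
    (x : EuclideanSpace ℝ (Fin n)) : muNth A n * ‖x‖^2 ≤ quadF A x := by
  obtain ⟨V, hV, hbound⟩ := cf_low hA (k := n-1) (by omega)
  have hVtop : V = ⊤ := Submodule.eq_top_of_finrank_eq (by
    rw [hV, finrank_euclideanSpace_fin]; omega)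
  have h := hbound x (hVtop ▸ Submodule.mem_top)
  have hidx : n - 1 + 1 = n := by omega
  rwa [hidx] at h

end spec

lemma specNorm_mul_le {m n r : ℕ} (P : Matrix (Fin m) (Fin n) ℝ) (Q : Matrix (Fin n) (Fin r) ℝ) :
    specNorm (P * Q) ≤ specNorm P * specNorm Q := by
  apply ContinuousLinearMap.opNorm_le_bound _ (mul_nonneg (specNorm_nonneg P) (specNorm_nonneg Q))
  intro x
  have h1 : ‖LinearMap.toContinuousLinearMap (Matrix.toEuclideanLin (P * Q)) x‖
      = ‖Matrix.toEuclideanLin P (Matrix.toEuclideanLin Q x)‖ := by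
    simp [toEuclideanLin_mul_apply]
  rw [h1]
  calc ‖Matrix.toEuclideanLin P (Matrix.toEuclideanLin Q x)‖
      ≤ specNorm P * ‖Matrix.toEuclideanLin Q x‖ := norm_toEuclideanLin_le _ _
    _ ≤ specNorm P * (specNorm Q * ‖x‖) :=
        mul_le_mul_of_nonneg_left (norm_toEuclideanLin_le _ _) (specNorm_nonneg P)
    _ = specNorm P * specNorm Q * ‖x‖ := by ring

open scoped MatrixOrder in
lemma exists_sqrt_posSemidef' {r : ℕ} {A : Matrix (Fin r) (Fin r) ℝ} (hA : A.PosSemidef) :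
    ∃ B : Matrix (Fin r) (Fin r) ℝ, B.PosSemidef ∧ B * B = A :=
  ⟨CFC.sqrt A, Matrix.nonneg_iff_posSemidef.mp (CFC.sqrt_nonneg A),
    CFC.sqrt_mul_sqrt_self A hA.nonneg⟩

/-- Lemma C.1(iv): under `ΛₙᵀΛₙ/n → Σ_Λ` positive definite and `Γ^F` positive definite,
the `j`-th largest eigenvalue of `Λₙ Γ^F Λₙᵀ` grows linearly in `n`, with
`μ_r(Σ_Λ) μ_j(Γ^F) ≤ liminf μ_j/n ≤ limsup μ_j/n ≤ μ_j(Σ_Λ) μ_1(Γ^F)`. -/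
theorem common_component_eigenvalues_linear_divergence
    (r : ℕ) (hr : 1 ≤ r)
    (SigmaL GammaF : Matrix (Fin r) (Fin r) ℝ)
    (hSigmaL : SigmaL.PosDef) (hGammaF : GammaF.PosDef)
    (Lam : (n : ℕ) → Matrix (Fin n) (Fin r) ℝ)
    (hconv : Tendsto (fun n : ℕ => specNorm ((n : ℝ)⁻¹ • ((Lam n)ᵀ * Lam n) - SigmaL))
      atTop (nhds 0)) :
    ∀ j : Fin r,
      0 < muNth SigmaL r * muNth GammaF ((j : ℕ) + 1) ∧
      muNth SigmaL r * muNth GammaF ((j : ℕ) + 1) ≤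
        atTop.liminf (fun n : ℕ => muNth (Lam n * GammaF * (Lam n)ᵀ) ((j : ℕ) + 1) / n) ∧
      atTop.limsup (fun n : ℕ => muNth (Lam n * GammaF * (Lam n)ᵀ) ((j : ℕ) + 1) / n) ≤
        muNth SigmaL ((j : ℕ) + 1) * muNth GammaF 1 := by
  intro j
  set k := (j : ℕ) with hkdef
  have hkr : k < r := j.2
  have hSh : SigmaL.IsHermitian := hSigmaL.1
  have hGh : GammaF.IsHermitian := hGammaF.1
  obtain ⟨B, hBps, hBB⟩ := exists_sqrt_posSemidef' hGammaF.posSemidef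
  have hBh : B.IsHermitian := hBps.isHermitian
  have hBt : Bᵀ = B := by rw [← conjTranspose_eq_transpose]; exact hBh.eq
  obtain ⟨C, hCps, hCC⟩ := exists_sqrt_posSemidef' hSigmaL.posSemidef
  have hCh : C.IsHermitian := hCps.isHermitian
  have hCt : Cᵀ = C := by rw [← conjTranspose_eq_transpose]; exact hCh.eq
  have hBSB : (B * SigmaL * B).IsHermitian := isHermitian_conj_real hBh hSh
  -- positivity of the bounds
  have hr1 : r - 1 + 1 = r := by omega
  have hmr : 0 < muNth SigmaL r := by
    have := muNth_pos hSigmaL (A := SigmaL) (k := r - 1) (by omega)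
    rwa [hr1] at this
  have hmj : 0 < muNth GammaF (k+1) := muNth_pos hGammaF hkr
  have hm1 : 0 < muNth GammaF 1 := muNth_pos hGammaF (k := 0) (by omega)
  -- quadratic identities
  have hquadG : ∀ x, quadF GammaF x = ‖Matrix.toEuclideanLin B x‖^2 := by
    intro x
    rw [← hBB, show B * B = Bᵀ * B by rw [hBt]]
    exact quadF_transpose_mul B x
  have hquadS : ∀ x, quadF SigmaL x = ‖Matrix.toEuclideanLin C x‖^2 := by
    intro x
    rw [← hCC, show C * C = Cᵀ * C by rw [hCt]]
    exact quadF_transpose_mul C x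
  -- lower bound for L∞
  have hlow : muNth SigmaL r * muNth GammaF (k+1) ≤ muNth (B * SigmaL * B) (k+1) := by
    have hsm := muNth_smul hGh hmr hkr
    rw [← hsm]
    refine muNth_mono (isHermitian_smul_real _ hGh) hBSB hkr fun x => ?_
    rw [quadF_smul, quadF_conj B SigmaL hBt x, hquadG x]
    exact muNth_last_le_quad hSh (by omega) _
  -- upper bound for L∞
  have hup : muNth (B * SigmaL * B) (k+1) ≤ muNth SigmaL (k+1) * muNth GammaF 1 := by
    have hfact : B * SigmaL * B = (C * B)ᵀ * (C * B) := by
      rw [Matrix.transpose_mul, hBt, hCt, ← hCC]; simp [Matrix.mul_assoc]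
    have htrans := (muNth_mul_transpose_comm (C * B) hkr hkr).symm
    have hfact2 : (C * B) * (C * B)ᵀ = C * GammaF * C := by
      rw [Matrix.transpose_mul, hBt, hCt, ← hBB]; simp [Matrix.mul_assoc]
    rw [hfact, htrans, hfact2]
    have hsm := muNth_smul hSh hm1 hkr
    have hmono : muNth (C * GammaF * C) (k+1) ≤ muNth ((muNth GammaF 1) • SigmaL) (k+1) := by
      refine muNth_mono (isHermitian_conj_real hCh hGh) (isHermitian_smul_real _ hSh) hkr
        fun x => ?_
      rw [quadF_smul, quadF_conj C GammaF hCt x, hquadS x]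
      exact quadF_le_muNth_one hGh (by omega) _
    rw [hsm] at hmono
    calc muNth (C * GammaF * C) (k+1) ≤ muNth GammaF 1 * muNth SigmaL (k+1) := hmono
      _ = muNth SigmaL (k+1) * muNth GammaF 1 := mul_comm _ _
  -- convergence of D n to L∞
  set T : ℕ → Matrix (Fin r) (Fin r) ℝ := fun n => (n:ℝ)⁻¹ • ((Lam n)ᵀ * Lam n) with hT
  have hTh : ∀ n, (T n).IsHermitian := by
    intro n
    refine isHermitian_smul_real _ ?_
    have := isHermitian_mul_transpose_self (Lam n)ᵀ
    rwa [Matrix.transpose_transpose] at this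
  set D : ℕ → ℝ := fun n => muNth (B * T n * B) (k+1) with hD
  have habs : ∀ n, |D n - muNth (B * SigmaL * B) (k+1)| ≤
      specNorm B * specNorm B * specNorm (T n - SigmaL) := by
    intro n
    have hH1 : (B * T n * B).IsHermitian := isHermitian_conj_real hBh (hTh n)
    have hW1 := muNth_le_muNth_add_specNorm hH1 hBSB hkr
    have hW2 := muNth_le_muNth_add_specNorm hBSB hH1 hkr
    have hdiff : B * T n * B - B * SigmaL * B = B * (T n - SigmaL) * B := by
      rw [Matrix.mul_sub, Matrix.sub_mul]
    have hspec : specNorm (B * T n * B - B * SigmaL * B) ≤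
        specNorm B * specNorm B * specNorm (T n - SigmaL) := by
      rw [hdiff]
      calc specNorm (B * (T n - SigmaL) * B)
          ≤ specNorm (B * (T n - SigmaL)) * specNorm B := specNorm_mul_le _ _
        _ ≤ specNorm B * specNorm (T n - SigmaL) * specNorm B :=
            mul_le_mul_of_nonneg_right (specNorm_mul_le _ _) (specNorm_nonneg _)
        _ = specNorm B * specNorm B * specNorm (T n - SigmaL) := by ring
    rw [specNorm_sub_comm] at hW2
    refine le_trans (abs_sub_le_iff.mpr ⟨?_, ?_⟩) hspec
    · linarith
    · linarith
  have hg : Tendsto (fun n => specNorm B * specNorm B * specNorm (T n - SigmaL))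
      atTop (nhds 0) := by
    have := hconv.const_mul (specNorm B * specNorm B)
    simpa using this
  have hDlim : Tendsto D atTop (nhds (muNth (B * SigmaL * B) (k+1))) := by
    have h0 : Tendsto (fun n => D n - muNth (B * SigmaL * B) (k+1)) atTop (nhds 0) :=
      squeeze_zero_norm (fun n => by simpa [Real.norm_eq_abs] using habs n) hg
    have := h0.add_const (muNth (B * SigmaL * B) (k+1))
    simpa using this
  -- eventual equality of the two sequences
  have heq : (fun n : ℕ => muNth (Lam n * GammaF * (Lam n)ᵀ) (k + 1) / n) =ᶠ[atTop] D := by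
    filter_upwards [eventually_ge_atTop (max r 1)] with n hn
    have hrn : r ≤ n := le_trans (le_max_left _ _) hn
    have hn1 : 1 ≤ n := le_trans (le_max_right _ _) hn
    have hnpos : (0:ℝ) < (n:ℝ)⁻¹ := by
      have : (0:ℝ) < (n:ℝ) := by exact_mod_cast hn1
      positivity
    have hfact : Lam n * GammaF * (Lam n)ᵀ = (Lam n * B) * (Lam n * B)ᵀ := by
      rw [Matrix.transpose_mul, hBt, ← hBB]; simp [Matrix.mul_assoc]
    have htrans := muNth_mul_transpose_comm (Lam n * B) (k := k) hkr
      (lt_of_lt_of_le hkr hrn)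
    have hfact2 : (Lam n * B)ᵀ * (Lam n * B) = B * ((Lam n)ᵀ * Lam n) * B := by
      rw [Matrix.transpose_mul, hBt]; simp [Matrix.mul_assoc]
    have hherm : (B * ((Lam n)ᵀ * Lam n) * B).IsHermitian := by
      refine isHermitian_conj_real hBh ?_
      have := isHermitian_mul_transpose_self (Lam n)ᵀ
      rwa [Matrix.transpose_transpose] at this
    have hsmul : B * T n * B = (n:ℝ)⁻¹ • (B * ((Lam n)ᵀ * Lam n) * B) := by
      rw [hT]
      simp [Matrix.mul_smul, Matrix.smul_mul]
    calc muNth (Lam n * GammaF * (Lam n)ᵀ) (k+1) / n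
        = muNth (B * ((Lam n)ᵀ * Lam n) * B) (k+1) / n := by
          rw [hfact, htrans, hfact2]
      _ = (n:ℝ)⁻¹ * muNth (B * ((Lam n)ᵀ * Lam n) * B) (k+1) := by
          rw [div_eq_inv_mul]
      _ = muNth ((n:ℝ)⁻¹ • (B * ((Lam n)ᵀ * Lam n) * B)) (k+1) :=
          (muNth_smul hherm hnpos hkr).symm
      _ = D n := by
          show _ = muNth (B * T n * B) (k+1)
          rw [hsmul]
  have hliminf : atTop.liminf (fun n : ℕ => muNth (Lam n * GammaF * (Lam n)ᵀ) (k + 1) / n)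
      = muNth (B * SigmaL * B) (k+1) := by
    rw [liminf_congr heq]; exact hDlim.liminf_eq
  have hlimsup : atTop.limsup (fun n : ℕ => muNth (Lam n * GammaF * (Lam n)ᵀ) (k + 1) / n)
      = muNth (B * SigmaL * B) (k+1) := by
    rw [limsup_congr heq]; exact hDlim.limsup_eq
  exact ⟨mul_pos hmr hmj, by rw [hliminf]; exact hlow, by rw [hlimsup]; exact hup⟩
end

section
/- Let r ≥ 1 be fixed, let Σ_Λ and Γ^F be r × r real symmetric positive definite matrices, and for each integer n > r let Λ_n be a real n × r matrix and let Γ^ξ_n be a real symmetric positive semidefinite n × n matrix. Assume lim_{n→∞} ‖ (Λ_nᵀ Λ_n)/n − Σ_Λ ‖ = 0 and sup_n ‖Γ^ξ_n‖ ≤ M for some M > 0, where ‖·‖ is the spectral norm. Set Γ^x_n = Λ_n Γ^F Λ_nᵀ + Γ^ξ_n. Then for every j ∈ {1,…,r}: liminf_{n→∞} μ_j(Γ^x_n)/n ≥ μ_r(Σ_Λ) · μ_j(Γ^F) > 0 and limsup_{n→∞} μ_j(Γ^x_n)/n ≤ μ_j(Σ_Λ) · μ_1(Γ^F) < ∞;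 moreover μ_{r+1}(Γ^x_n) ≤ M for every n > r, where μ_j(A) denotes the j-th largest eigenvalue of a real symmetric matrix A. -/
open Matrix Filter

namespace EG
variable {n : ℕ}

structure EigenData (n : ℕ) (A : Matrix (Fin n) (Fin n) ℝ) where
  U : Matrix (Fin n) (Fin n) ℝ
  ev : Fin n → ℝ
  hU1 : Uᵀ * U = 1
  hU2 : U * Uᵀ = 1
  hanti : Antitone ev
  hdecomp : A = U * Matrix.diagonal ev * Uᵀ
  hmu : ∀ j : Fin n, muNth A ((j : ℕ) + 1) = ev j

lemma muNth_eq_ofFn {A : Matrix (Fin n) (Fin n) ℝ} (hA : A.IsHermitian)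
    (ν : Fin n → ℝ) (hanti : Antitone ν)
    (hperm : (List.ofFn ν).Perm (List.ofFn hA.eigenvalues)) (j : Fin n) :
    muNth A ((j : ℕ) + 1) = ν j := by
  have hsorted : List.Pairwise (fun a b : ℝ => decide (b ≤ a) = true)
      ((List.ofFn hA.eigenvalues).mergeSort (fun a b => decide (b ≤ a))) := by
    exact List.pairwise_mergeSort (by intro a b c; simp; intro h1 h2; linarith)
      (by intro a b; simp [le_total]) _
  have hsorted2 : List.Pairwise (fun a b : ℝ => decide (b ≤ a) = true) (List.ofFn ν) := by
    rw [List.pairwise_ofFn]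
    intro i k hik
    simpa using hanti hik.le
  have hanti' : Std.Antisymm (fun a b : ℝ => decide (b ≤ a) = true) := by
    constructor; intro a b h1 h2; simp at h1 h2; linarith
  have heq : (List.ofFn hA.eigenvalues).mergeSort (fun a b => decide (b ≤ a))
      = List.ofFn ν := by
    exact List.Perm.eq_of_pairwise' hsorted hsorted2 ((List.mergeSort_perm _ _).trans hperm.symm)
  rw [muNth, dif_pos hA, heq]
  simp only [Nat.add_sub_cancel]
  rw [List.getD_eq_getElem _ _ (by simp [j.isLt])]
  simp

noncomputable def eigenData {A : Matrix (Fin n) (Fin n) ℝ} (hA : A.IsHermitian) :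
    EigenData n A := by
  classical
  let σ : Equiv.Perm (Fin n) := Tuple.sort (fun i => -hA.eigenvalues i)
  have hmono := Tuple.monotone_sort (fun i => -hA.eigenvalues i)
  have hanti : Antitone (hA.eigenvalues ∘ σ) := by
    intro a b hab
    have := hmono hab
    simpa [σ] using this
  let U₀ : Matrix (Fin n) (Fin n) ℝ := (hA.eigenvectorUnitary : Matrix (Fin n) (Fin n) ℝ)
  have hU₀1 : U₀ᵀ * U₀ = 1 := by
    have := (Matrix.mem_unitaryGroup_iff').mp hA.eigenvectorUnitary.2
    simpa [U₀, Matrix.star_eq_conjTranspose, Matrix.conjTranspose_eq_transpose_of_trivial] using this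
  have hU₀2 : U₀ * U₀ᵀ = 1 := by
    have := (Matrix.mem_unitaryGroup_iff).mp hA.eigenvectorUnitary.2
    simpa [U₀, Matrix.star_eq_conjTranspose, Matrix.conjTranspose_eq_transpose_of_trivial] using this
  have hspec : A = U₀ * Matrix.diagonal hA.eigenvalues * U₀ᵀ := by
    have := hA.spectral_theorem
    simpa [U₀, Matrix.star_eq_conjTranspose, Matrix.conjTranspose_eq_transpose_of_trivial, Function.comp] using this
  refine ⟨U₀.submatrix id σ, hA.eigenvalues ∘ σ, ?_, ?_, hanti, ?_, ?_⟩
  · ext j k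
    have h1 : ((U₀.submatrix id σ)ᵀ * U₀.submatrix id σ) j k = (U₀ᵀ * U₀) (σ j) (σ k) := by
      simp [Matrix.mul_apply]
    rw [h1, hU₀1]
    simp [Matrix.one_apply, σ.injective.eq_iff]
  · ext i k
    have h1 : (U₀.submatrix id σ * (U₀.submatrix id σ)ᵀ) i k
        = ∑ j, U₀ i (σ j) * U₀ k (σ j) := by
      simp [Matrix.mul_apply]
    rw [h1, Equiv.sum_comp σ (fun j' => U₀ i j' * U₀ k j'), ← hU₀2]
    simp [Matrix.mul_apply]
  · ext i k
    have h1 : (U₀.submatrix id σ * Matrix.diagonal (hA.eigenvalues ∘ σ)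
        * (U₀.submatrix id σ)ᵀ) i k
        = ∑ j, U₀ i (σ j) * hA.eigenvalues (σ j) * U₀ k (σ j) := by
      simp [Matrix.mul_apply, Matrix.diagonal, Finset.sum_mul]
    rw [h1, Equiv.sum_comp σ (fun j' => U₀ i j' * hA.eigenvalues j' * U₀ k j')]
    conv_lhs => rw [hspec]
    simp [Matrix.mul_apply, Matrix.diagonal, Finset.sum_mul]
  · intro j
    exact muNth_eq_ofFn hA _ hanti (σ.ofFn_comp_perm _) j


def Q (A : Matrix (Fin n) (Fin n) ℝ) (x : Fin n → ℝ) : ℝ := x ⬝ᵥ (A *ᵥ x)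

namespace EigenData

variable {A : Matrix (Fin n) (Fin n) ℝ} (e : EigenData n A)

lemma dot_y (x x' : Fin n → ℝ) : (e.Uᵀ *ᵥ x) ⬝ᵥ (e.Uᵀ *ᵥ x') = x ⬝ᵥ x' := by
  rw [Matrix.dotProduct_mulVec, Matrix.vecMul_transpose, Matrix.mulVec_mulVec, e.hU2,
    Matrix.one_mulVec]

lemma dot_self_eq (x : Fin n → ℝ) : x ⬝ᵥ x = ∑ i, ((e.Uᵀ *ᵥ x) i)^2 := by
  rw [← e.dot_y x x, dotProduct]
  congr 1; ext i; ring

lemma Q_eq (x : Fin n → ℝ) : Q A x = ∑ i, e.ev i * ((e.Uᵀ *ᵥ x) i)^2 := by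
  conv_lhs => rw [Q, e.hdecomp]
  rw [← Matrix.mulVec_mulVec, ← Matrix.mulVec_mulVec, Matrix.dotProduct_mulVec]
  have h1 : ∀ v : Fin n → ℝ, v ᵥ* e.U = e.Uᵀ *ᵥ v := by
    intro v
    rw [← Matrix.vecMul_transpose, Matrix.transpose_transpose]
  rw [h1, dotProduct]
  congr 1; ext i
  rw [Matrix.mulVec_diagonal]
  ring

lemma coord_mulVec (v : Fin n → ℝ) :
    e.Uᵀ *ᵥ (A *ᵥ v) = fun i => e.ev i * ((e.Uᵀ *ᵥ v) i) := by
  have hUA : e.Uᵀ * A = Matrix.diagonal e.ev * e.Uᵀ := by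
    have h := congrArg (fun B => e.Uᵀ * B) e.hdecomp
    rw [h, show e.U * Matrix.diagonal e.ev * e.Uᵀ = e.U * (Matrix.diagonal e.ev * e.Uᵀ) from
      mul_assoc _ _ _, ← mul_assoc, e.hU1, one_mul]
  rw [Matrix.mulVec_mulVec, hUA, ← Matrix.mulVec_mulVec]
  ext i
  rw [Matrix.mulVec_diagonal]

end EigenData

/-- The subspace of vectors supported on `S`. -/
def coordSpace (S : Finset (Fin n)) : Submodule ℝ (Fin n → ℝ) where
  carrier := {x | ∀ i ∉ S, x i = 0}
  add_mem' := by intro a b ha hb i hi; simp [ha i hi, hb i hi]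
  zero_mem' := by intro i _; rfl
  smul_mem' := by intro c a ha i hi; simp [ha i hi]

lemma mem_coordSpace {S : Finset (Fin n)} {x : Fin n → ℝ} :
    x ∈ coordSpace S ↔ ∀ i ∉ S, x i = 0 := Iff.rfl

noncomputable def coordEquiv (S : Finset (Fin n)) :
    coordSpace S ≃ₗ[ℝ] ({i : Fin n // i ∈ S} → ℝ) where
  toFun x i := x.1 i
  invFun y := ⟨fun i => if h : i ∈ S then y ⟨i, h⟩ else 0, by
    intro i hi; simp [hi]⟩
  left_inv := by
    intro x
    ext i
    by_cases h : i ∈ S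
    · simp [h]
    · simp [h, (x.2 i h).symm]
  right_inv := by intro y; ext i; simp
  map_add' := by intros; rfl
  map_smul' := by intros; rfl

lemma finrank_coordSpace (S : Finset (Fin n)) :
    Module.finrank ℝ (coordSpace S) = S.card := by
  rw [LinearEquiv.finrank_eq (coordEquiv S), Module.finrank_pi]
  simp

lemma card_filter_lt {j : ℕ} (hj : j ≤ n) :
    (Finset.univ.filter (fun i : Fin n => (i : ℕ) < j)).card = j := by
  have : (Finset.univ.filter (fun i : Fin n => (i : ℕ) < j))
      = Finset.map (Fin.castLEEmb hj) Finset.univ := by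
    ext i
    simp only [Finset.mem_filter, Finset.mem_univ, true_and, Finset.mem_map]
    constructor
    · intro h
      exact ⟨⟨(i : ℕ), h⟩, by ext; simp⟩
    · rintro ⟨a, rfl⟩
      simp
  rw [this, Finset.card_map]
  simp

lemma card_filter_not_lt {j : ℕ} (hj : j ≤ n) :
    (Finset.univ.filter (fun i : Fin n => ¬ (i : ℕ) < j)).card = n - j := by
  have h := Finset.card_filter_add_card_filter_not
    (s := (Finset.univ : Finset (Fin n))) (p := fun i : Fin n => (i : ℕ) < j)
  rw [card_filter_lt hj] at h
  simp only [Finset.card_univ, Fintype.card_fin] at h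
  omega

namespace EigenData

variable {A : Matrix (Fin n) (Fin n) ℝ} (e : EigenData n A)

/-- `mulVec` by `e.Uᵀ` as a linear equivalence. -/
noncomputable def lequiv : (Fin n → ℝ) ≃ₗ[ℝ] (Fin n → ℝ) :=
  LinearEquiv.ofLinear (Matrix.mulVecLin e.Uᵀ) (Matrix.mulVecLin e.U)
    (by rw [← Matrix.mulVecLin_mul, e.hU1, Matrix.mulVecLin_one])
    (by rw [← Matrix.mulVecLin_mul]
        have : e.U * e.Uᵀ = 1 := e.hU2
        rw [this, Matrix.mulVecLin_one])

/-- Span of the top `j` eigenvectors. -/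
noncomputable def upSpace (j : ℕ) : Submodule ℝ (Fin n → ℝ) :=
  Submodule.comap (e.lequiv : (Fin n → ℝ) →ₗ[ℝ] (Fin n → ℝ))
    (coordSpace (Finset.univ.filter (fun i : Fin n => (i : ℕ) < j)))

/-- Span of the eigenvectors from index `j` on. -/
noncomputable def downSpace (j : ℕ) : Submodule ℝ (Fin n → ℝ) :=
  Submodule.comap (e.lequiv : (Fin n → ℝ) →ₗ[ℝ] (Fin n → ℝ))
    (coordSpace (Finset.univ.filter (fun i : Fin n => ¬ (i : ℕ) < j)))

lemma mem_upSpace {j : ℕ} {x : Fin n → ℝ} :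
    x ∈ e.upSpace j ↔ ∀ i : Fin n, ¬ (i : ℕ) < j → (e.Uᵀ *ᵥ x) i = 0 := by
  rw [upSpace, Submodule.mem_comap]
  have : (e.lequiv : (Fin n → ℝ) →ₗ[ℝ] (Fin n → ℝ)) x = e.Uᵀ *ᵥ x := rfl
  rw [this, mem_coordSpace]
  simp

lemma mem_downSpace {j : ℕ} {x : Fin n → ℝ} :
    x ∈ e.downSpace j ↔ ∀ i : Fin n, (i : ℕ) < j → (e.Uᵀ *ᵥ x) i = 0 := by
  rw [downSpace, Submodule.mem_comap]
  have : (e.lequiv : (Fin n → ℝ) →ₗ[ℝ] (Fin n → ℝ)) x = e.Uᵀ *ᵥ x := rfl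
  rw [this, mem_coordSpace]
  simp

lemma finrank_comap_lequiv (V : Submodule ℝ (Fin n → ℝ)) :
    Module.finrank ℝ (Submodule.comap (e.lequiv : (Fin n → ℝ) →ₗ[ℝ] (Fin n → ℝ)) V)
      = Module.finrank ℝ V := by
  rw [Submodule.comap_equiv_eq_map_symm, LinearEquiv.finrank_map_eq]

lemma finrank_upSpace {j : ℕ} (hj : j ≤ n) :
    Module.finrank ℝ (e.upSpace j) = j := by
  rw [upSpace, finrank_comap_lequiv, finrank_coordSpace, card_filter_lt hj]

lemma finrank_downSpace {j : ℕ} (hj : j ≤ n) :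
    Module.finrank ℝ (e.downSpace j) = n - j := by
  rw [downSpace, finrank_comap_lequiv, finrank_coordSpace, card_filter_not_lt hj]

lemma Q_ge_on_up (j : Fin n) {x : Fin n → ℝ} (hx : x ∈ e.upSpace ((j : ℕ) + 1)) :
    e.ev j * (x ⬝ᵥ x) ≤ Q A x := by
  rw [e.Q_eq, e.dot_self_eq, Finset.mul_sum]
  apply Finset.sum_le_sum
  intro i _
  by_cases h : (i : ℕ) < (j : ℕ) + 1
  · have hij : i ≤ j := by
      rw [Fin.le_def]; omega
    have := e.hanti hij
    nlinarith [sq_nonneg ((e.Uᵀ *ᵥ x) i)]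
  · rw [e.mem_upSpace.mp hx i h]
    simp

lemma Q_le_on_down (j : Fin n) {x : Fin n → ℝ} (hx : x ∈ e.downSpace (j : ℕ)) :
    Q A x ≤ e.ev j * (x ⬝ᵥ x) := by
  rw [e.Q_eq, e.dot_self_eq, Finset.mul_sum]
  apply Finset.sum_le_sum
  intro i _
  by_cases h : (i : ℕ) < (j : ℕ)
  · rw [e.mem_downSpace.mp hx i h]
    simp
  · have hij : j ≤ i := by
      rw [Fin.le_def]; omega
    have := e.hanti hij
    nlinarith [sq_nonneg ((e.Uᵀ *ᵥ x) i)]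

end EigenData

lemma exists_ne_zero_inf (V W : Submodule ℝ (Fin n → ℝ))
    (h : n < Module.finrank ℝ V + Module.finrank ℝ W) :
    ∃ x, x ∈ V ⊓ W ∧ x ≠ 0 := by
  have h1 := Submodule.finrank_sup_add_finrank_inf_eq V W
  have h2 : Module.finrank ℝ (V ⊔ W : Submodule ℝ (Fin n → ℝ)) ≤ n := by
    have := Submodule.finrank_le (V ⊔ W : Submodule ℝ (Fin n → ℝ))
    rwa [Module.finrank_pi, Fintype.card_fin] at this
  have h3 : 0 < Module.finrank ℝ (V ⊓ W : Submodule ℝ (Fin n → ℝ)) := by omega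
  have h4 : (V ⊓ W : Submodule ℝ (Fin n → ℝ)) ≠ ⊥ := by
    intro hbot
    rw [hbot] at h3
    simp [finrank_bot] at h3
  obtain ⟨x, hx, hx0⟩ := Submodule.exists_mem_ne_zero_of_ne_bot h4
  exact ⟨x, hx, hx0⟩

lemma dotProduct_self_pos {x : Fin n → ℝ} (hx : x ≠ 0) : 0 < x ⬝ᵥ x := by
  have h1 : (0:ℝ) ≤ x ⬝ᵥ x := Finset.sum_nonneg (fun i _ => mul_self_nonneg _)
  rcases h1.lt_or_eq with h | h
  · exact h
  · exact absurd (dotProduct_self_eq_zero.mp h.symm) hx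

/-- Courant–Fischer, lower-bound half. -/
lemma le_muNth {A : Matrix (Fin n) (Fin n) ℝ} (hA : A.IsHermitian) (j : Fin n)
    (V : Submodule ℝ (Fin n → ℝ)) (hV : (j : ℕ) + 1 ≤ Module.finrank ℝ V)
    (m : ℝ) (h : ∀ x ∈ V, m * (x ⬝ᵥ x) ≤ Q A x) :
    m ≤ muNth A ((j : ℕ) + 1) := by
  classical
  set e := eigenData hA
  rw [e.hmu j]
  obtain ⟨x, hx, hx0⟩ := exists_ne_zero_inf V (e.downSpace (j : ℕ)) (by
    rw [e.finrank_downSpace (le_of_lt j.isLt)]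
    have := j.isLt
    omega)
  have h1 := h x hx.1
  have h2 := e.Q_le_on_down j hx.2
  have h3 := dotProduct_self_pos hx0
  nlinarith

/-- Courant–Fischer, upper-bound half. -/
lemma muNth_le {A : Matrix (Fin n) (Fin n) ℝ} (hA : A.IsHermitian) (j : Fin n)
    (W : Submodule ℝ (Fin n → ℝ)) (hW : n - (j : ℕ) ≤ Module.finrank ℝ W)
    (m : ℝ) (h : ∀ x ∈ W, Q A x ≤ m * (x ⬝ᵥ x)) :
    muNth A ((j : ℕ) + 1) ≤ m := by
  classical
  set e := eigenData hA
  rw [e.hmu j]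
  obtain ⟨x, hx, hx0⟩ := exists_ne_zero_inf (e.upSpace ((j : ℕ) + 1)) W (by
    rw [e.finrank_upSpace j.isLt]
    have := j.isLt
    omega)
  have h1 := h x hx.2
  have h2 := e.Q_ge_on_up j hx.1
  have h3 := dotProduct_self_pos hx0
  nlinarith


-- quadratic form algebra
lemma Q_add (A B : Matrix (Fin n) (Fin n) ℝ) (x : Fin n → ℝ) :
    Q (A + B) x = Q A x + Q B x := by
  simp [Q, Matrix.add_mulVec, dotProduct_add]

lemma Q_sub (A B : Matrix (Fin n) (Fin n) ℝ) (x : Fin n → ℝ) :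
    Q (A - B) x = Q A x - Q B x := by
  simp [Q, Matrix.sub_mulVec, dotProduct_sub]

lemma Q_smul (c : ℝ) (A : Matrix (Fin n) (Fin n) ℝ) (x : Fin n → ℝ) :
    Q (c • A) x = c * Q A x := by
  simp [Q, Matrix.smul_mulVec, dotProduct_smul, smul_eq_mul]

lemma Q_nonneg_of_posSemidef {A : Matrix (Fin n) (Fin n) ℝ} (hA : A.PosSemidef)
    (x : Fin n → ℝ) : 0 ≤ Q A x := by
  have := hA.dotProduct_mulVec_nonneg x
  simpa [Q] using this

lemma Q_pos_of_posDef {A : Matrix (Fin n) (Fin n) ℝ} (hA : A.PosDef)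
    {x : Fin n → ℝ} (hx : x ≠ 0) : 0 < Q A x := by
  have := hA.dotProduct_mulVec_pos hx
  simpa [Q] using this

namespace EigenData

variable {A : Matrix (Fin n) (Fin n) ℝ} (e : EigenData n A)

lemma dot_y' (x x' : Fin n → ℝ) : (e.U *ᵥ x) ⬝ᵥ (e.U *ᵥ x') = x ⬝ᵥ x' := by
  rw [Matrix.dotProduct_mulVec]
  have h : ∀ v : Fin n → ℝ, v ᵥ* e.U = e.Uᵀ *ᵥ v := by
    intro v
    rw [← Matrix.vecMul_transpose, Matrix.transpose_transpose]
  rw [h, Matrix.mulVec_mulVec, e.hU1, Matrix.one_mulVec]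

lemma ev_eq_Q (j : Fin n) : e.ev j = Q A (e.U *ᵥ Pi.single j 1) := by
  rw [e.Q_eq]
  have hy : e.Uᵀ *ᵥ (e.U *ᵥ Pi.single j 1) = Pi.single j 1 := by
    rw [Matrix.mulVec_mulVec, e.hU1, Matrix.one_mulVec]
  rw [hy]
  rw [Finset.sum_eq_single j]
  · simp
  · intro i _ hij
    simp [Pi.single_eq_of_ne hij]
  · simp

lemma base_ne_zero (j : Fin n) : e.U *ᵥ Pi.single j 1 ≠ 0 := by
  intro h
  have h2 : e.Uᵀ *ᵥ (e.U *ᵥ Pi.single j 1) = Pi.single j 1 := by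
    rw [Matrix.mulVec_mulVec, e.hU1, Matrix.one_mulVec]
  rw [h] at h2
  simp only [Matrix.mulVec_zero] at h2
  have := congrFun h2 j
  simp at this

lemma base_dot (j : Fin n) :
    (e.U *ᵥ Pi.single j 1) ⬝ᵥ (e.U *ᵥ Pi.single j 1) = 1 := by
  rw [e.dot_y']
  simp [dotProduct, Pi.single_apply]

end EigenData

lemma muNth_nonneg_of_posSemidef {A : Matrix (Fin n) (Fin n) ℝ}
    (hA : A.PosSemidef) (j : Fin n) : 0 ≤ muNth A ((j : ℕ) + 1) := by
  set e := eigenData hA.1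
  rw [e.hmu j, e.ev_eq_Q j]
  exact Q_nonneg_of_posSemidef hA _

lemma muNth_pos_of_posDef {A : Matrix (Fin n) (Fin n) ℝ}
    (hA : A.PosDef) (j : Fin n) : 0 < muNth A ((j : ℕ) + 1) := by
  set e := eigenData hA.1
  rw [e.hmu j, e.ev_eq_Q j]
  exact Q_pos_of_posDef hA (e.base_ne_zero j)

/-- the quadratic form is bounded by the spectral norm -/
lemma abs_Q_le_specNorm (A : Matrix (Fin n) (Fin n) ℝ) (x : Fin n → ℝ) :
    |Q A x| ≤ specNorm A * (x ⬝ᵥ x) := by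
  classical
  set x' : EuclideanSpace ℝ (Fin n) := (WithLp.equiv 2 (Fin n → ℝ)).symm x with hx'
  set T := LinearMap.toContinuousLinearMap (Matrix.toEuclideanLin A)
  have hTx : T x' = (WithLp.equiv 2 (Fin n → ℝ)).symm (A *ᵥ x) := by
    have : T x' = Matrix.toEuclideanLin A x' := rfl
    rw [this, Matrix.toEuclideanLin_apply]
    simp [hx']
  have hinner : Q A x = inner ℝ x' (T x') := by
    rw [hTx, Q]
    simp [PiLp.inner_apply, dotProduct, RCLike.inner_apply, hx']
    exact Finset.sum_congr rfl (fun i _ => mul_comm _ _)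
  have hnorm : ‖x'‖ ^ 2 = x ⬝ᵥ x := by
    rw [← real_inner_self_eq_norm_sq]
    simp [PiLp.inner_apply, dotProduct, hx']
    rw [EuclideanSpace.norm_sq_eq]
    simp [Real.norm_eq_abs, sq_abs, sq]
  rw [hinner]
  calc |inner ℝ x' (T x')| ≤ ‖x'‖ * ‖T x'‖ := abs_real_inner_le_norm _ _
    _ ≤ ‖x'‖ * (‖T‖ * ‖x'‖) := by
        have := T.le_opNorm x'
        have h0 : (0:ℝ) ≤ ‖x'‖ := norm_nonneg _
        nlinarith [norm_nonneg (T x')]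
    _ = ‖T‖ * ‖x'‖ ^ 2 := by ring
    _ = specNorm A * (x ⬝ᵥ x) := by rw [hnorm]; rfl


lemma conjT_eq_transpose (A : Matrix (Fin n) (Fin n) ℝ) : Aᴴ = Aᵀ := by
  ext i j; simp [Matrix.conjTranspose_apply]

lemma isHermitian_of_symm {A : Matrix (Fin n) (Fin n) ℝ} (h : Aᵀ = A) :
    A.IsHermitian := by
  rw [Matrix.IsHermitian, conjT_eq_transpose, h]

lemma dotProduct_self_nonneg' (x : Fin n → ℝ) : 0 ≤ x ⬝ᵥ x :=
  Finset.sum_nonneg (fun i _ => mul_self_nonneg _)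

/-- Master comparison lemma, upper form. -/
lemma muNth_le_combo {A B : Matrix (Fin n) (Fin n) ℝ} (hA : A.IsHermitian)
    (hB : B.IsHermitian) (j : Fin n) {c d : ℝ} (hc : 0 ≤ c)
    (h : ∀ x, Q B x ≤ c * Q A x + d * (x ⬝ᵥ x)) :
    muNth B ((j : ℕ) + 1) ≤ c * muNth A ((j : ℕ) + 1) + d := by
  classical
  set e := eigenData hA
  rw [e.hmu j]
  apply muNth_le hB j (e.downSpace (j : ℕ)) (by rw [e.finrank_downSpace j.isLt.le]) _ ?_
  intro x hx
  have h1 := e.Q_le_on_down j hx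
  have h2 := h x
  have h3 := dotProduct_self_nonneg' x
  nlinarith

/-- Master comparison lemma, lower form. -/
lemma combo_le_muNth {A B : Matrix (Fin n) (Fin n) ℝ} (hA : A.IsHermitian)
    (hB : B.IsHermitian) (j : Fin n) {c d : ℝ} (hc : 0 ≤ c)
    (h : ∀ x, c * Q A x + d * (x ⬝ᵥ x) ≤ Q B x) :
    c * muNth A ((j : ℕ) + 1) + d ≤ muNth B ((j : ℕ) + 1) := by
  classical
  set e := eigenData hA
  rw [e.hmu j]
  apply le_muNth hB j (e.upSpace ((j : ℕ) + 1)) (by rw [e.finrank_upSpace j.isLt]) _ ?_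
  intro x hx
  have h1 := e.Q_ge_on_up j hx
  have h2 := h x
  have h3 := dotProduct_self_nonneg' x
  nlinarith

/-- Weyl's eigenvalue monotonicity under addition of a psd matrix. -/
lemma muNth_mono {A P : Matrix (Fin n) (Fin n) ℝ} (hA : A.IsHermitian)
    (hP : P.PosSemidef) (j : Fin n) :
    muNth A ((j : ℕ) + 1) ≤ muNth (A + P) ((j : ℕ) + 1) := by
  have hAP : (A + P).IsHermitian := hA.add hP.1
  have := muNth_le_combo hAP hA j (c := 1) (d := 0) zero_le_one (fun x => by
    have h1 := Q_nonneg_of_posSemidef hP x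
    have h2 : Q (A + P) x = Q A x + Q P x := Q_add A P x
    nlinarith)
  linarith

/-- Weyl's eigenvalue perturbation bound. -/
lemma abs_muNth_sub_le {A B : Matrix (Fin n) (Fin n) ℝ} (hA : A.IsHermitian)
    (hB : B.IsHermitian) (j : Fin n) :
    |muNth A ((j : ℕ) + 1) - muNth B ((j : ℕ) + 1)| ≤ specNorm (A - B) := by
  rw [abs_sub_le_iff]
  have hkey : ∀ x : Fin n → ℝ, |Q A x - Q B x| ≤ specNorm (A - B) * (x ⬝ᵥ x) := by
    intro x
    have := abs_Q_le_specNorm (A - B) x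
    rwa [Q_sub] at this
  constructor
  · have := muNth_le_combo hB hA j (c := 1) (d := specNorm (A - B)) zero_le_one (fun x => by
      have h1 := hkey x
      rw [abs_le] at h1
      linarith [h1.2])
    linarith
  · have := muNth_le_combo hA hB j (c := 1) (d := specNorm (A - B)) zero_le_one (fun x => by
      have h1 := hkey x
      rw [abs_le] at h1
      linarith [h1.1])
    linarith

lemma smul_isHermitian {A : Matrix (Fin n) (Fin n) ℝ} (hA : A.IsHermitian) (c : ℝ) :
    (c • A).IsHermitian := by
  rw [Matrix.IsHermitian, Matrix.conjTranspose_smul, hA]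
  simp

/-- positive scaling of eigenvalues -/
lemma muNth_smul {A : Matrix (Fin n) (Fin n) ℝ} (hA : A.IsHermitian) {c : ℝ}
    (hc : 0 < c) (j : Fin n) :
    muNth (c • A) ((j : ℕ) + 1) = c * muNth A ((j : ℕ) + 1) := by
  have h1 := muNth_le_combo hA (smul_isHermitian hA c) j (c := c) (d := 0) hc.le
    (fun x => by rw [Q_smul]; ring_nf; exact le_refl _)
  have h2 := muNth_le_combo (smul_isHermitian hA c) hA j (c := c⁻¹) (d := 0)
    (by positivity) (fun x => by
      rw [Q_smul]
      have : c⁻¹ * (c * Q A x) = Q A x := by field_simp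
      linarith [this.ge])
  have h3 := mul_le_mul_of_nonneg_left h2 hc.le
  have h4 : c * (c⁻¹ * muNth (c • A) ((j : ℕ) + 1) + 0) = muNth (c • A) ((j : ℕ) + 1) := by
    rw [add_zero]; field_simp
  rw [h4] at h3
  linarith

/-- global Rayleigh upper bound -/
lemma Q_le_mu_one {A : Matrix (Fin n) (Fin n) ℝ} (hA : A.IsHermitian) (hn : 0 < n)
    (x : Fin n → ℝ) : Q A x ≤ muNth A 1 * (x ⬝ᵥ x) := by
  classical
  set e := eigenData hA
  have h0 : muNth A 1 = e.ev ⟨0, hn⟩ := by simpa using e.hmu ⟨0, hn⟩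
  have hx : x ∈ e.downSpace ((⟨0, hn⟩ : Fin n) : ℕ) := by
    rw [EigenData.mem_downSpace]
    intro i hi
    exact absurd hi (by simp)
  have := e.Q_le_on_down ⟨0, hn⟩ hx
  rw [h0]
  exact this

/-- global Rayleigh lower bound -/
lemma mu_last_le_Q {A : Matrix (Fin n) (Fin n) ℝ} (hA : A.IsHermitian) (hn : 0 < n)
    (x : Fin n → ℝ) : muNth A n * (x ⬝ᵥ x) ≤ Q A x := by
  classical
  set e := eigenData hA
  set j : Fin n := ⟨n - 1, by omega⟩
  have h0 : muNth A ((j : ℕ) + 1) = e.ev j := e.hmu j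
  have hj : (j : ℕ) + 1 = n := by simp [j]; omega
  have hx : x ∈ e.upSpace ((j : ℕ) + 1) := by
    rw [EigenData.mem_upSpace]
    intro i hi
    exact absurd (by omega : (i : ℕ) < (j : ℕ) + 1) hi
  have := e.Q_ge_on_up j hx
  have h2 : muNth A n = e.ev j := (congrArg (muNth A) hj).symm.trans h0
  rw [h2]
  exact this


lemma conjT_eq_transpose' {m r : ℕ} (A : Matrix (Fin m) (Fin r) ℝ) : Aᴴ = Aᵀ := by
  ext i j; simp [Matrix.conjTranspose_apply]

lemma vecMul_eq {m r : ℕ} (C : Matrix (Fin m) (Fin r) ℝ) (v : Fin m → ℝ) :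
    v ᵥ* C = Cᵀ *ᵥ v := by
  rw [← Matrix.vecMul_transpose, Matrix.transpose_transpose]

lemma dot_CC {m r : ℕ} (C : Matrix (Fin m) (Fin r) ℝ) (a b : Fin r → ℝ) :
    (C *ᵥ a) ⬝ᵥ (C *ᵥ b) = ((Cᵀ * C) *ᵥ a) ⬝ᵥ b := by
  rw [Matrix.dotProduct_mulVec, vecMul_eq, Matrix.mulVec_mulVec]

lemma posSemidef_t_mul_self {m r : ℕ} (C : Matrix (Fin m) (Fin r) ℝ) :
    (Cᵀ * C).PosSemidef := by
  have := Matrix.posSemidef_conjTranspose_mul_self C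
  rwa [conjT_eq_transpose'] at this

lemma posSemidef_self_mul_t {m r : ℕ} (C : Matrix (Fin m) (Fin r) ℝ) :
    (C * Cᵀ).PosSemidef := by
  have := Matrix.posSemidef_self_mul_conjTranspose C
  rwa [conjT_eq_transpose'] at this

lemma Q_conj {S X : Matrix (Fin n) (Fin n) ℝ} (hS : Sᵀ = S) (x : Fin n → ℝ) :
    Q (S * X * S) x = Q X (S *ᵥ x) := by
  rw [Q, Q, mul_assoc, ← Matrix.mulVec_mulVec, Matrix.dotProduct_mulVec, vecMul_eq, hS,
    ← Matrix.mulVec_mulVec]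

lemma finrank_comap_equiv (f : (Fin n → ℝ) ≃ₗ[ℝ] (Fin n → ℝ)) (V : Submodule ℝ (Fin n → ℝ)) :
    Module.finrank ℝ (Submodule.comap (f : (Fin n → ℝ) →ₗ[ℝ] (Fin n → ℝ)) V)
      = Module.finrank ℝ V := by
  rw [Submodule.comap_equiv_eq_map_symm, LinearEquiv.finrank_map_eq]

section SqrtHelper

open scoped MatrixOrder

noncomputable def _root_.Matrix.PosSemidef.sqrt {r : ℕ} {G : Matrix (Fin r) (Fin r) ℝ}
    (_h : G.PosSemidef) : Matrix (Fin r) (Fin r) ℝ := CFC.sqrt G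

lemma _root_.Matrix.PosSemidef.posSemidef_sqrt {r : ℕ} {G : Matrix (Fin r) (Fin r) ℝ}
    (h : G.PosSemidef) : h.sqrt.PosSemidef :=
  (CFC.sqrt_nonneg G).posSemidef

lemma _root_.Matrix.PosSemidef.sqrt_mul_self {r : ℕ} {G : Matrix (Fin r) (Fin r) ℝ}
    (h : G.PosSemidef) : h.sqrt * h.sqrt = G :=
  CFC.sqrt_mul_sqrt_self G h.nonneg

end SqrtHelper

section Ostrowski

variable {r : ℕ} {X G : Matrix (Fin r) (Fin r) ℝ}

lemma sqrt_symm (hG : G.PosDef) : (hG.posSemidef.sqrt)ᵀ = hG.posSemidef.sqrt := by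
  have h := hG.posSemidef.posSemidef_sqrt.1
  rwa [Matrix.IsHermitian, conjT_eq_transpose'] at h

lemma sqrt_sq (hG : G.PosDef) : hG.posSemidef.sqrt * hG.posSemidef.sqrt = G :=
  hG.posSemidef.sqrt_mul_self

noncomputable def sqrtEquiv (hG : G.PosDef) : (Fin r → ℝ) ≃ₗ[ℝ] (Fin r → ℝ) := by
  have hdet : IsUnit (hG.posSemidef.sqrt).det := by
    have h1 : (hG.posSemidef.sqrt).det * (hG.posSemidef.sqrt).det = G.det := by
      rw [← Matrix.det_mul, sqrt_sq hG]
    have h2 := hG.det_pos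
    rw [isUnit_iff_ne_zero]
    intro h0
    rw [h0, mul_zero] at h1
    rw [← h1] at h2
    exact lt_irrefl _ h2
  have := hG.posSemidef.sqrt.invertibleOfIsUnitDet hdet
  exact LinearEquiv.ofLinear (Matrix.mulVecLin hG.posSemidef.sqrt)
    (Matrix.mulVecLin (⅟(hG.posSemidef.sqrt)))
    (by rw [← Matrix.mulVecLin_mul, mul_invOf_self, Matrix.mulVecLin_one])
    (by rw [← Matrix.mulVecLin_mul, invOf_mul_self, Matrix.mulVecLin_one])

lemma sqrtEquiv_apply (hG : G.PosDef) (x : Fin r → ℝ) :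
    sqrtEquiv hG x = hG.posSemidef.sqrt *ᵥ x := rfl

lemma SXS_isHermitian (hX : X.PosSemidef) (hG : G.PosDef) :
    (hG.posSemidef.sqrt * X * hG.posSemidef.sqrt).IsHermitian := by
  apply isHermitian_of_symm
  have hXs : Xᵀ = X := by
    have := hX.1
    rwa [Matrix.IsHermitian, conjT_eq_transpose'] at this
  rw [Matrix.transpose_mul, Matrix.transpose_mul, sqrt_symm hG, hXs, mul_assoc]

lemma dot_sqrt (hG : G.PosDef) (x : Fin r → ℝ) :
    (hG.posSemidef.sqrt *ᵥ x) ⬝ᵥ (hG.posSemidef.sqrt *ᵥ x) = Q G x := by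
  rw [dot_CC, sqrt_symm hG, sqrt_sq hG, Q, dotProduct_comm]

lemma ostrowski_upper (hX : X.PosSemidef) (hG : G.PosDef) (j : Fin r) :
    muNth (hG.posSemidef.sqrt * X * hG.posSemidef.sqrt) ((j : ℕ) + 1)
      ≤ muNth X ((j : ℕ) + 1) * muNth G 1 := by
  classical
  have hr0 : 0 < r := j.pos
  set S := hG.posSemidef.sqrt with hSdef
  set eX := eigenData hX.1
  apply muNth_le (SXS_isHermitian hX hG) j
    (Submodule.comap ((sqrtEquiv hG : (Fin r → ℝ) →ₗ[ℝ] (Fin r → ℝ)))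
      (eX.downSpace (j : ℕ)))
    (by rw [finrank_comap_equiv, eX.finrank_downSpace j.isLt.le])
  intro x hx
  have hmem : S *ᵥ x ∈ eX.downSpace (j : ℕ) := hx
  have h1 : Q (hG.posSemidef.sqrt * X * hG.posSemidef.sqrt) x = Q X (S *ᵥ x) :=
    Q_conj (sqrt_symm hG) x
  have h2 := eX.Q_le_on_down j hmem
  have h3 : (S *ᵥ x) ⬝ᵥ (S *ᵥ x) = Q G x := dot_sqrt hG x
  have h4 := Q_le_mu_one hG.1 hr0 x
  have h5 : 0 ≤ eX.ev j := by
    rw [← eX.hmu j]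
    exact muNth_nonneg_of_posSemidef hX j
  have h6 : eX.ev j = muNth X ((j : ℕ) + 1) := (eX.hmu j).symm
  have h7 : 0 ≤ Q G x := by
    rw [← h3]
    exact dotProduct_self_nonneg' _
  nlinarith

lemma ostrowski_lower (hX : X.PosSemidef) (hG : G.PosDef) (j : Fin r) :
    muNth X r * muNth G ((j : ℕ) + 1)
      ≤ muNth (hG.posSemidef.sqrt * X * hG.posSemidef.sqrt) ((j : ℕ) + 1) := by
  classical
  have hr0 : 0 < r := j.pos
  set S := hG.posSemidef.sqrt with hSdef
  set eG := eigenData hG.1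
  apply le_muNth (SXS_isHermitian hX hG) j (eG.upSpace ((j : ℕ) + 1))
    (by rw [eG.finrank_upSpace j.isLt])
  intro x hx
  have h1 : Q (hG.posSemidef.sqrt * X * hG.posSemidef.sqrt) x = Q X (S *ᵥ x) :=
    Q_conj (sqrt_symm hG) x
  have h2 := mu_last_le_Q hX.1 hr0 (S *ᵥ x)
  have h3 : (S *ᵥ x) ⬝ᵥ (S *ᵥ x) = Q G x := dot_sqrt hG x
  have h4 := eG.Q_ge_on_up j hx
  have h5 : 0 ≤ muNth X r := by
    set jr : Fin r := ⟨r - 1, by omega⟩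
    have : muNth X ((jr : ℕ) + 1) = muNth X r := by
      congr 1
      simp [jr]
      omega
    rw [← this]
    exact muNth_nonneg_of_posSemidef hX jr
  have h6 : eG.ev j = muNth G ((j : ℕ) + 1) := (eG.hmu j).symm
  have h7 : 0 ≤ x ⬝ᵥ x := dotProduct_self_nonneg' x
  have h8 := mul_le_mul_of_nonneg_left h4 h5
  have h9 : muNth X r * ((S *ᵥ x) ⬝ᵥ (S *ᵥ x)) = muNth X r * Q G x := by rw [h3]
  rw [← h6]
  nlinarith [h8, h9, h2, h1]

end Ostrowski

/-- nonzero singular spectra of `CᵀC` and `CCᵀ` agree: one inequality. -/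
lemma muNth_tc_le_ct {m r : ℕ} (C : Matrix (Fin m) (Fin r) ℝ) (j : ℕ)
    (hjr : j < r) (hjm : j < m) :
    muNth (Cᵀ * C) (j + 1) ≤ muNth (C * Cᵀ) (j + 1) := by
  classical
  have hD := posSemidef_t_mul_self C
  have hCCt := posSemidef_self_mul_t C
  set D := Cᵀ * C with hDdef
  set e := eigenData hD.1
  set jr : Fin r := ⟨j, hjr⟩
  set jm : Fin m := ⟨j, hjm⟩
  set t := e.ev jr with htdef
  have hmuD : muNth D (j + 1) = t := e.hmu jr
  by_cases ht : 0 < t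
  · -- map the top space through C
    set V' := e.upSpace (j + 1) with hV'def
    have hQup : ∀ v ∈ V', t * (v ⬝ᵥ v) ≤ Q D v := fun v hv => e.Q_ge_on_up jr hv
    have hker : ∀ v ∈ V', C *ᵥ v = 0 → v = 0 := by
      intro v hv hCv
      have h1 : Q D v = (C *ᵥ v) ⬝ᵥ (C *ᵥ v) := by
        rw [dot_CC, Q, dotProduct_comm]
      rw [hCv] at h1
      simp only [zero_dotProduct] at h1
      have h2 := hQup v hv
      have h3 := dotProduct_self_nonneg' v
      have h4 : v ⬝ᵥ v = 0 := by nlinarith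
      exact dotProduct_self_eq_zero.mp h4
    set g : V' →ₗ[ℝ] (Fin m → ℝ) := (Matrix.mulVecLin C).comp V'.subtype with hgdef
    have hginj : Function.Injective g := by
      rw [← LinearMap.ker_eq_bot, LinearMap.ker_eq_bot']
      intro v hv
      have := hker v.1 v.2 hv
      exact Subtype.ext this
    have hrange : LinearMap.range g = Submodule.map (Matrix.mulVecLin C) V' := by
      rw [hgdef, LinearMap.range_comp, Submodule.range_subtype]
    have hfinrank : Module.finrank ℝ (Submodule.map (Matrix.mulVecLin C) V') = j + 1 := by
      rw [← hrange, LinearMap.finrank_range_of_inj hginj]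
      have := e.finrank_upSpace (show j + 1 ≤ r from hjr)
      rw [hV'def]
      exact this
    have hle := le_muNth hCCt.1 jm (Submodule.map (Matrix.mulVecLin C) V')
      (by rw [hfinrank]) t ?_
    · rw [hmuD]
      exact hle
    intro x hx
    obtain ⟨v, hv, rfl⟩ := Submodule.mem_map.mp hx
    have hxv : (Matrix.mulVecLin C) v = C *ᵥ v := rfl
    rw [hxv]
    set y := e.Uᵀ *ᵥ v with hydef
    -- coordinates of D *ᵥ v
    have hDy : e.Uᵀ *ᵥ (D *ᵥ v) = fun i => e.ev i * y i := e.coord_mulVec v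
    have hQx : Q (C * Cᵀ) (C *ᵥ v) = (D *ᵥ v) ⬝ᵥ (D *ᵥ v) := by
      have hsplit : (C * Cᵀ) *ᵥ (C *ᵥ v) = C *ᵥ (D *ᵥ v) := by
        rw [← Matrix.mulVec_mulVec, Matrix.mulVec_mulVec v Cᵀ C, ← hDdef]
      rw [Q, hsplit, dot_CC, ← hDdef]
    have hxx : (C *ᵥ v) ⬝ᵥ (C *ᵥ v) = (D *ᵥ v) ⬝ᵥ v := by
      rw [dot_CC, ← hDdef]
    have hDD : (D *ᵥ v) ⬝ᵥ (D *ᵥ v) = ∑ i, (e.ev i * y i) ^ 2 := by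
      rw [e.dot_self_eq (D *ᵥ v), hDy]
    have hDv : (D *ᵥ v) ⬝ᵥ v = ∑ i, e.ev i * (y i) ^ 2 := by
      rw [dotProduct_comm, ← Q, e.Q_eq, ← hydef]
    rw [hQx, hxx, hDD, hDv, Finset.mul_sum]
    apply Finset.sum_le_sum
    intro i _
    by_cases hij : (i : ℕ) < j + 1
    · have hle2 : i ≤ jr := by
        rw [Fin.le_def]
        simp only [jr]
        omega
      have h5 : t ≤ e.ev i := e.hanti hle2
      nlinarith [sq_nonneg (y i), mul_nonneg (mul_nonneg (sub_nonneg.mpr h5)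
        (ht.le.trans h5)) (sq_nonneg (y i))]
    · have : y i = 0 := e.mem_upSpace.mp hv i hij
      simp [this]
  · push_neg at ht
    rw [hmuD]
    have h0 : (0:ℝ) ≤ muNth (C * Cᵀ) ((jm : ℕ) + 1) := muNth_nonneg_of_posSemidef hCCt jm
    have hjm1 : ((jm : ℕ) : ℕ) = j := rfl
    rw [hjm1] at h0
    linarith

end EG

open EG

/-- Lemma C.1(vi): the eigengap of `Γ^x = Λ Γ^F Λᵀ + Γ^ξ`; its `r` largest eigenvalues
diverge linearly in `n` while the `(r+1)`-th stays bounded by `M`. -/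
theorem observable_covariance_eigengap
    (r : ℕ) (hr : 1 ≤ r)
    (SigmaL GammaF : Matrix (Fin r) (Fin r) ℝ)
    (hSigmaL : SigmaL.PosDef) (hGammaF : GammaF.PosDef)
    (Lam : (n : ℕ) → Matrix (Fin n) (Fin r) ℝ)
    (GammaXi : (n : ℕ) → Matrix (Fin n) (Fin n) ℝ)
    (hXi : ∀ n, (GammaXi n).PosSemidef)
    (M : ℝ) (hM : 0 < M) (hXinorm : ∀ n, specNorm (GammaXi n) ≤ M)
    (hconv : Tendsto (fun n : ℕ => specNorm ((n : ℝ)⁻¹ • ((Lam n)ᵀ * Lam n) - SigmaL))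
      atTop (nhds 0)) :
    (∀ j : Fin r,
      0 < muNth SigmaL r * muNth GammaF ((j : ℕ) + 1) ∧
      muNth SigmaL r * muNth GammaF ((j : ℕ) + 1) ≤
        atTop.liminf
          (fun n : ℕ => muNth (Lam n * GammaF * (Lam n)ᵀ + GammaXi n) ((j : ℕ) + 1) / n) ∧
      atTop.limsup
          (fun n : ℕ => muNth (Lam n * GammaF * (Lam n)ᵀ + GammaXi n) ((j : ℕ) + 1) / n) ≤
        muNth SigmaL ((j : ℕ) + 1) * muNth GammaF 1) ∧
    ∀ n : ℕ, r < n → muNth (Lam n * GammaF * (Lam n)ᵀ + GammaXi n) (r + 1) ≤ M := by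
  classical
  have hr0 : 0 < r := hr
  set S : Matrix (Fin r) (Fin r) ℝ := hGammaF.posSemidef.sqrt with hSdef
  set X : (n : ℕ) → Matrix (Fin r) (Fin r) ℝ := fun n => (Lam n)ᵀ * Lam n with hXdef
  have hXpsd : ∀ n, (X n).PosSemidef := fun n => posSemidef_t_mul_self (Lam n)
  set C : (n : ℕ) → Matrix (Fin n) (Fin r) ℝ := fun n => Lam n * S with hCdef
  have hSS : S * S = GammaF := sqrt_sq hGammaF
  have hSsymm : Sᵀ = S := sqrt_symm hGammaF
  have hCC : ∀ n, Lam n * GammaF * (Lam n)ᵀ = C n * (C n)ᵀ := by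
    intro n
    show Lam n * GammaF * (Lam n)ᵀ = (Lam n * S) * (Lam n * S)ᵀ
    rw [Matrix.transpose_mul, hSsymm, ← hSS]
    simp only [Matrix.mul_assoc]
  have hCtC : ∀ n, (C n)ᵀ * C n = S * X n * S := by
    intro n
    show (Lam n * S)ᵀ * (Lam n * S) = S * ((Lam n)ᵀ * Lam n) * S
    rw [Matrix.transpose_mul, hSsymm]
    simp only [Matrix.mul_assoc]
  have hCCt_psd : ∀ n, (C n * (C n)ᵀ).PosSemidef := fun n => posSemidef_self_mul_t (C n)
  -- convergence of the rescaled eigenvalues of X n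
  have hconv' : ∀ k : Fin r, Tendsto (fun n : ℕ => muNth (X n) ((k : ℕ) + 1) / n)
      atTop (nhds (muNth SigmaL ((k : ℕ) + 1))) := by
    intro k
    rw [← tendsto_sub_nhds_zero_iff]
    apply squeeze_zero_norm' ?_ hconv
    filter_upwards [eventually_ge_atTop 1] with n hn
    have hn0 : (0 : ℝ) < (n : ℝ) := by exact_mod_cast hn
    have hscale : muNth ((n : ℝ)⁻¹ • X n) ((k : ℕ) + 1)
        = (n : ℝ)⁻¹ * muNth (X n) ((k : ℕ) + 1) :=
      muNth_smul (hXpsd n).1 (inv_pos.mpr hn0) k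
    have hweyl := abs_muNth_sub_le (smul_isHermitian (hXpsd n).1 ((n : ℝ)⁻¹)) hSigmaL.1 k
    rw [hscale] at hweyl
    rw [Real.norm_eq_abs, div_eq_inv_mul]
    exact hweyl
  -- positivity facts
  set jlast : Fin r := ⟨r - 1, by omega⟩ with hjlastdef
  have hlast : (jlast : ℕ) + 1 = r := by simp [hjlastdef]; omega
  have hmuSr_pos : 0 < muNth SigmaL r := by
    have := muNth_pos_of_posDef hSigmaL jlast
    rwa [hlast] at this
  have hmuG_pos : ∀ k : Fin r, 0 < muNth GammaF ((k : ℕ) + 1) :=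
    fun k => muNth_pos_of_posDef hGammaF k
  have hmuG1_pos : 0 < muNth GammaF 1 := by
    have := muNth_pos_of_posDef hGammaF ⟨0, hr0⟩
    simpa using this
  have hconvr : Tendsto (fun n : ℕ => muNth (X n) r / n) atTop (nhds (muNth SigmaL r)) := by
    have := hconv' jlast
    simpa [hlast] using this
  -- eventual two-sided bounds
  have hmain : ∀ j : Fin r, ∀ n : ℕ, r < n →
      muNth (X n) r * muNth GammaF ((j : ℕ) + 1)
        ≤ muNth (Lam n * GammaF * (Lam n)ᵀ + GammaXi n) ((j : ℕ) + 1) ∧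
      muNth (Lam n * GammaF * (Lam n)ᵀ + GammaXi n) ((j : ℕ) + 1)
        ≤ muNth (X n) ((j : ℕ) + 1) * muNth GammaF 1 + M := by
    intro j n hrn
    have hjr : (j : ℕ) < r := j.isLt
    have hjn : (j : ℕ) < n := lt_trans hjr hrn
    have hCCth : (C n * (C n)ᵀ).IsHermitian := (hCCt_psd n).1
    constructor
    · -- lower bound
      have h1 : muNth (C n * (C n)ᵀ) ((j : ℕ) + 1)
          ≤ muNth (C n * (C n)ᵀ + GammaXi n) ((j : ℕ) + 1) :=
        muNth_mono hCCth (hXi n) ⟨(j : ℕ), hjn⟩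
      have h2 : muNth ((C n)ᵀ * C n) ((j : ℕ) + 1) ≤ muNth (C n * (C n)ᵀ) ((j : ℕ) + 1) :=
        muNth_tc_le_ct (C n) (j : ℕ) hjr hjn
      have h3 : muNth (X n) r * muNth GammaF ((j : ℕ) + 1)
          ≤ muNth (S * X n * S) ((j : ℕ) + 1) :=
        ostrowski_lower (hXpsd n) hGammaF j
      rw [← hCtC n] at h3
      rw [hCC n]
      linarith
    · -- upper bound
      have h1 : muNth (C n * (C n)ᵀ + GammaXi n) ((j : ℕ) + 1)
          ≤ 1 * muNth (C n * (C n)ᵀ) ((j : ℕ) + 1) + M := by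
        apply muNth_le_combo hCCth (hCCth.add (hXi n).1) ⟨(j : ℕ), hjn⟩ zero_le_one
        intro x
        rw [Q_add]
        have ha := abs_Q_le_specNorm (GammaXi n) x
        rw [abs_le] at ha
        have hb := hXinorm n
        have hc := EG.dotProduct_self_nonneg' x
        nlinarith [ha.2]
      have h2 : muNth (C n * (C n)ᵀ) ((j : ℕ) + 1) ≤ muNth ((C n)ᵀ * C n) ((j : ℕ) + 1) := by
        have := muNth_tc_le_ct (C n)ᵀ (j : ℕ) hjn hjr
        rwa [Matrix.transpose_transpose] at this
      have h3 : muNth (S * X n * S) ((j : ℕ) + 1)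
          ≤ muNth (X n) ((j : ℕ) + 1) * muNth GammaF 1 :=
        ostrowski_upper (hXpsd n) hGammaF j
      rw [← hCtC n] at h3
      rw [hCC n]
      linarith
  constructor
  · -- part 1
    intro j
    set f : ℕ → ℝ :=
      fun n => muNth (Lam n * GammaF * (Lam n)ᵀ + GammaXi n) ((j : ℕ) + 1) / n with hfdef
    set Lo : ℕ → ℝ := fun n => muNth (X n) r / n * muNth GammaF ((j : ℕ) + 1) with hLodef
    set Up : ℕ → ℝ :=
      fun n => muNth (X n) ((j : ℕ) + 1) / n * muNth GammaF 1 + M / n with hUpdef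
    have hLo : Tendsto Lo atTop (nhds (muNth SigmaL r * muNth GammaF ((j : ℕ) + 1))) :=
      hconvr.mul_const _
    have hUp : Tendsto Up atTop
        (nhds (muNth SigmaL ((j : ℕ) + 1) * muNth GammaF 1)) := by
      have h1 := (hconv' j).mul_const (muNth GammaF 1)
      have h2 : Tendsto (fun n : ℕ => M / n) atTop (nhds 0) :=
        tendsto_const_div_atTop_nhds_zero_nat M
      have := h1.add h2
      simpa using this
    have hLof : ∀ᶠ n in atTop, Lo n ≤ f n := by
      filter_upwards [eventually_gt_atTop r] with n hrn
      have hn0 : (0 : ℝ) < (n : ℝ) := by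
        have : 0 < n := lt_of_le_of_lt (Nat.zero_le r) hrn
        exact_mod_cast this
      have := (hmain j n hrn).1
      rw [hLodef, hfdef]
      simp only
      rw [div_mul_eq_mul_div]
      gcongr
    have hfUp : ∀ᶠ n in atTop, f n ≤ Up n := by
      filter_upwards [eventually_gt_atTop r] with n hrn
      have hn0 : (0 : ℝ) < (n : ℝ) := by
        have : 0 < n := lt_of_le_of_lt (Nat.zero_le r) hrn
        exact_mod_cast this
      have := (hmain j n hrn).2
      rw [hUpdef, hfdef]
      simp only
      rw [div_mul_eq_mul_div, ← add_div]
      gcongr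
    -- boundedness facts
    set ℓ := muNth SigmaL r * muNth GammaF ((j : ℕ) + 1) with hldef
    have hfbdd : IsBoundedUnder (· ≥ ·) atTop f := by
      refine ⟨ℓ - 1, ?_⟩
      rw [eventually_map]
      filter_upwards [hLof, hLo.eventually (eventually_gt_nhds (show ℓ - 1 < ℓ by linarith))]
        with n h1 h2
      linarith
    have hfbdd2 : IsBoundedUnder (· ≤ ·) atTop f := by
      refine ⟨muNth SigmaL ((j : ℕ) + 1) * muNth GammaF 1 + 1, ?_⟩
      rw [eventually_map]
      filter_upwards [hfUp, hUp.eventually (eventually_lt_nhds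
        (show muNth SigmaL ((j : ℕ) + 1) * muNth GammaF 1
          < muNth SigmaL ((j : ℕ) + 1) * muNth GammaF 1 + 1 by linarith))] with n h1 h2
      linarith
    refine ⟨mul_pos hmuSr_pos (hmuG_pos j), ?_, ?_⟩
    · -- liminf
      have h1 : atTop.liminf Lo = ℓ := hLo.liminf_eq
      have h2 : atTop.liminf Lo ≤ atTop.liminf f :=
        liminf_le_liminf hLof (hLo.isBoundedUnder_ge) (hfbdd2.isCoboundedUnder_ge)
      rw [h1] at h2
      exact h2
    · -- limsup
      have h1 : atTop.limsup Up = muNth SigmaL ((j : ℕ) + 1) * muNth GammaF 1 :=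
        hUp.limsup_eq
      have h2 : atTop.limsup f ≤ atTop.limsup Up :=
        limsup_le_limsup hfUp (hfbdd.isCoboundedUnder_le) (hUp.isBoundedUnder_le)
      rw [h1] at h2
      exact h2
  · -- part 2
    intro n hrn
    have hCCth : (C n * (C n)ᵀ).IsHermitian := (hCCt_psd n).1
    set jn : Fin n := ⟨r, hrn⟩ with hjndef
    have h1 : muNth (C n * (C n)ᵀ + GammaXi n) (r + 1)
        ≤ 1 * muNth (C n * (C n)ᵀ) (r + 1) + M := by
      apply muNth_le_combo hCCth (hCCth.add (hXi n).1) jn zero_le_one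
      intro x
      rw [Q_add]
      have ha := abs_Q_le_specNorm (GammaXi n) x
      rw [abs_le] at ha
      have hb := hXinorm n
      have hc := EG.dotProduct_self_nonneg' x
      nlinarith [ha.2]
    have h2 : muNth (C n * (C n)ᵀ) (r + 1) ≤ 0 := by
      have hle : muNth (C n * (C n)ᵀ) ((jn : ℕ) + 1) ≤ 0 := by
        apply muNth_le hCCth jn (LinearMap.ker (Matrix.mulVecLin (C n)ᵀ)) ?_ 0 ?_
        · -- finrank of the kernel
          have hjnval : ((jn : ℕ)) = r := rfl
          rw [hjnval]
          have hrn2 := LinearMap.finrank_range_add_finrank_ker (Matrix.mulVecLin (C n)ᵀ)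
          have hd : Module.finrank ℝ (Fin n → ℝ) = n := by
            rw [Module.finrank_pi, Fintype.card_fin]
          have hrange : Module.finrank ℝ (LinearMap.range (Matrix.mulVecLin (C n)ᵀ)) ≤ r := by
            have := Submodule.finrank_le (LinearMap.range (Matrix.mulVecLin (C n)ᵀ))
            rwa [Module.finrank_pi, Fintype.card_fin] at this
          rw [hd] at hrn2
          omega
        · intro x hx
          have hx0 : (C n)ᵀ *ᵥ x = 0 := hx
          have hq : Q (C n * (C n)ᵀ) x = ((C n)ᵀ *ᵥ x) ⬝ᵥ ((C n)ᵀ *ᵥ x) := by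
            have := EG.dot_CC (C n)ᵀ x x
            rw [Matrix.transpose_transpose] at this
            rw [Q, dotProduct_comm, ← this, dotProduct_comm]
          rw [hq, hx0]
          simp
      exact hle
    rw [hCC n]
    linarith
end

section
/- Let (Ω, 𝓕, ℙ) be a probability space, let n, T, r ≥ 1 be integers, and let F_{jt} : Ω → ℝ (j = 1,…,r; t = 1,…,T) and ξ_{it} : Ω → ℝ (i = 1,…,n; t = 1,…,T) be random variables with all fourth-order products integrable. Suppose: (a) E[ξ_{it} F_{jt} ξ_{is} F_{js}] = E[F_{jt} F_{js}] · E[ξ_{it} ξ_{is}] for all i, j, t, s; (b) |E[F_{jt} F_{js}]| ≤ M_F for all j, t, s; (c) ∑_{t=1}^T ∑_{s=1}^T |E[ξ_{it} ξ_{is}]| ≤ T · M₃ for every i. Then, writing F_t ∈ ℝ^r and ξ_t ∈ ℝⁿ for the corresponding random vectors, E[ ‖ (1/(√n · T)) ∑_{t=1}^T F_t ξ_tᵀ ‖² ] ≤ r · M_F · M₃ / T, where ‖·‖ is the spectral (operator) norm of the r × n matrix. -/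
open Matrix MeasureTheory

lemma specNorm_sq_le {m n : ℕ} (A : Matrix (Fin m) (Fin n) ℝ) :
    specNorm A ^ 2 ≤ ∑ j, ∑ i, A j i ^ 2 := by
  set S : ℝ := ∑ j, ∑ i, A j i ^ 2 with hSdef
  have hS : 0 ≤ S := by positivity
  have h : specNorm A ≤ Real.sqrt S := by
    apply ContinuousLinearMap.opNorm_le_bound _ (Real.sqrt_nonneg _)
    intro x
    have hx : ‖x‖ = Real.sqrt (∑ i, x i ^ 2) := by
      rw [EuclideanSpace.norm_eq]
      congr 1
      exact Finset.sum_congr rfl fun i _ => by rw [Real.norm_eq_abs, sq_abs]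
    have happ : LinearMap.toContinuousLinearMap (Matrix.toEuclideanLin A) x =
        Matrix.toEuclideanLin A x := rfl
    rw [happ, EuclideanSpace.norm_eq, hx, ← Real.sqrt_mul hS]
    apply Real.sqrt_le_sqrt
    have hcoord : ∀ j, (Matrix.toEuclideanLin A x) j = ∑ i, A j i * x i := by
      intro j; rfl
    calc ∑ j, ‖(Matrix.toEuclideanLin A x) j‖ ^ 2
        = ∑ j, (∑ i, A j i * x i) ^ 2 := by
          refine Finset.sum_congr rfl fun j _ => ?_
          rw [Real.norm_eq_abs, sq_abs, hcoord]
      _ ≤ ∑ j, (∑ i, A j i ^ 2) * (∑ i, x i ^ 2) := by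
          refine Finset.sum_le_sum fun j _ => ?_
          exact Finset.sum_mul_sq_le_sq_mul_sq _ _ _
      _ = S * ∑ i, x i ^ 2 := by rw [hSdef, ← Finset.sum_mul]
  calc specNorm A ^ 2 ≤ Real.sqrt S ^ 2 :=
        pow_le_pow_left₀ (norm_nonneg _) h 2
    _ = S := Real.sq_sqrt hS

/-- Lemma C.3: under the factorization of mixed fourth moments
`E[ξ_{it} F_{jt} ξ_{is} F_{js}] = E[F_{jt}F_{js}] E[ξ_{it}ξ_{is}]`, bounded factor second
moments `|E[F_{jt}F_{js}]| ≤ M_F`, and summable idiosyncratic autocovariances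
`∑_{t,s} |E[ξ_{it}ξ_{is}]| ≤ T M₃`, the cross-moment matrix satisfies
`E[‖(1/(√n T)) ∑_t F_t ξ_tᵀ‖²] ≤ r M_F M₃ / T`. -/
theorem factor_idiosyncratic_cross_moment_bound
    (Ω : Type*) [MeasurableSpace Ω] (P : Measure Ω) [IsProbabilityMeasure P]
    (n T r : ℕ) (hn : 1 ≤ n) (hT : 1 ≤ T) (hr : 1 ≤ r)
    (F : Fin r → Fin T → Ω → ℝ) (ξ : Fin n → Fin T → Ω → ℝ)
    (hint4 : ∀ (i : Fin n) (j : Fin r) (t s : Fin T),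
      Integrable (fun ω => ξ i t ω * F j t ω * ξ i s ω * F j s ω) P)
    (hintF : ∀ (j k : Fin r) (t s : Fin T), Integrable (fun ω => F j t ω * F k s ω) P)
    (hintXi : ∀ (i l : Fin n) (t s : Fin T), Integrable (fun ω => ξ i t ω * ξ l s ω) P)
    (hfact : ∀ (i : Fin n) (j : Fin r) (t s : Fin T),
      ∫ ω, ξ i t ω * F j t ω * ξ i s ω * F j s ω ∂P =
        (∫ ω, F j t ω * F j s ω ∂P) * (∫ ω, ξ i t ω * ξ i s ω ∂P))
    (M_F : ℝ) (hMF : ∀ (j : Fin r) (t s : Fin T), |∫ ω, F j t ω * F j s ω ∂P| ≤ M_F)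
    (M₃ : ℝ) (hM3 : ∀ i : Fin n, ∑ t, ∑ s, |∫ ω, ξ i t ω * ξ i s ω ∂P| ≤ (T : ℝ) * M₃) :
    ∫ ω, specNorm
        ((Real.sqrt n * T)⁻¹ • ∑ t, Matrix.vecMulVec (fun j => F j t ω) (fun i => ξ i t ω)) ^ 2 ∂P
      ≤ (r : ℝ) * M_F * M₃ / T := by
  set c : ℝ := (Real.sqrt n * T)⁻¹ with hc
  set g : Ω → ℝ := fun ω => c ^ 2 *
    ∑ j : Fin r, ∑ i : Fin n, ∑ t : Fin T, ∑ s : Fin T,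
      ξ i t ω * F j t ω * ξ i s ω * F j s ω with hg
  have hgint : Integrable g P := by
    refine Integrable.const_mul ?_ _
    refine integrable_finset_sum _ fun j _ => ?_
    refine integrable_finset_sum _ fun i _ => ?_
    refine integrable_finset_sum _ fun t _ => ?_
    exact integrable_finset_sum _ fun s _ => hint4 i j t s
  have hptwise : ∀ ω, specNorm
      ((Real.sqrt n * T)⁻¹ • ∑ t, Matrix.vecMulVec (fun j => F j t ω) (fun i => ξ i t ω)) ^ 2
      ≤ g ω := by
    intro ω
    refine le_trans (specNorm_sq_le _) ?_
    have hentry : ∀ (j : Fin r) (i : Fin n),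
        ((Real.sqrt n * T)⁻¹ • ∑ t, Matrix.vecMulVec (fun j => F j t ω)
          (fun i => ξ i t ω)) j i = c * ∑ t, F j t ω * ξ i t ω := by
      intro j i
      simp [Matrix.smul_apply, Matrix.sum_apply, Matrix.vecMulVec_apply, hc]
    rw [hg]
    simp only
    rw [Finset.mul_sum]
    refine le_of_eq (Finset.sum_congr rfl fun j _ => ?_)
    rw [Finset.mul_sum]
    refine Finset.sum_congr rfl fun i _ => ?_
    rw [hentry j i, mul_pow, sq (∑ t, F j t ω * ξ i t ω), Finset.sum_mul_sum]
    congr 1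
    refine Finset.sum_congr rfl fun t _ => Finset.sum_congr rfl fun s _ => by ring
  have hmono : ∫ ω, specNorm
      ((Real.sqrt n * T)⁻¹ • ∑ t, Matrix.vecMulVec (fun j => F j t ω) (fun i => ξ i t ω)) ^ 2 ∂P
      ≤ ∫ ω, g ω ∂P := by
    refine integral_mono_of_nonneg (Filter.Eventually.of_forall fun ω => sq_nonneg _)
      hgint (Filter.Eventually.of_forall hptwise)
  refine hmono.trans ?_
  -- compute the integral of g
  have hginteval : ∫ ω, g ω ∂P = c ^ 2 *
      ∑ j : Fin r, ∑ i : Fin n, ∑ t : Fin T, ∑ s : Fin T,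
        (∫ ω, F j t ω * F j s ω ∂P) * (∫ ω, ξ i t ω * ξ i s ω ∂P) := by
    rw [hg]
    rw [integral_const_mul]
    congr 1
    rw [integral_finset_sum _ fun j _ => integrable_finset_sum _ fun i _ =>
      integrable_finset_sum _ fun t _ => integrable_finset_sum _ fun s _ => hint4 i j t s]
    refine Finset.sum_congr rfl fun j _ => ?_
    rw [integral_finset_sum _ fun i _ =>
      integrable_finset_sum _ fun t _ => integrable_finset_sum _ fun s _ => hint4 i j t s]
    refine Finset.sum_congr rfl fun i _ => ?_
    rw [integral_finset_sum _ fun t _ => integrable_finset_sum _ fun s _ => hint4 i j t s]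
    refine Finset.sum_congr rfl fun t _ => ?_
    rw [integral_finset_sum _ fun s _ => hint4 i j t s]
    exact Finset.sum_congr rfl fun s _ => hfact i j t s
  rw [hginteval]
  have hMF0 : 0 ≤ M_F := le_trans (abs_nonneg _) (hMF ⟨0, hr⟩ ⟨0, hT⟩ ⟨0, hT⟩)
  have hc2 : (0:ℝ) ≤ c ^ 2 := sq_nonneg _
  have hsumbound : ∑ j : Fin r, ∑ i : Fin n, ∑ t : Fin T, ∑ s : Fin T,
      (∫ ω, F j t ω * F j s ω ∂P) * (∫ ω, ξ i t ω * ξ i s ω ∂P)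
      ≤ (r : ℝ) * ((n : ℝ) * (M_F * ((T : ℝ) * M₃))) := by
    calc ∑ j : Fin r, ∑ i : Fin n, ∑ t : Fin T, ∑ s : Fin T,
        (∫ ω, F j t ω * F j s ω ∂P) * (∫ ω, ξ i t ω * ξ i s ω ∂P)
        ≤ ∑ _j : Fin r, ∑ _i : Fin n, (M_F * ((T : ℝ) * M₃)) := by
          refine Finset.sum_le_sum fun j _ => Finset.sum_le_sum fun i _ => ?_
          calc ∑ t : Fin T, ∑ s : Fin T,
              (∫ ω, F j t ω * F j s ω ∂P) * (∫ ω, ξ i t ω * ξ i s ω ∂P)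
              ≤ ∑ t : Fin T, ∑ s : Fin T, M_F * |∫ ω, ξ i t ω * ξ i s ω ∂P| := by
                refine Finset.sum_le_sum fun t _ => Finset.sum_le_sum fun s _ => ?_
                refine le_trans (le_abs_self _) ?_
                rw [abs_mul]
                exact mul_le_mul_of_nonneg_right (hMF j t s) (abs_nonneg _)
            _ = M_F * ∑ t : Fin T, ∑ s : Fin T, |∫ ω, ξ i t ω * ξ i s ω ∂P| := by
                simp_rw [Finset.mul_sum]
            _ ≤ M_F * ((T : ℝ) * M₃) := mul_le_mul_of_nonneg_left (hM3 i) hMF0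
      _ = (r : ℝ) * ((n : ℝ) * (M_F * ((T : ℝ) * M₃))) := by
          simp [Finset.sum_const, mul_comm]
  refine le_trans (mul_le_mul_of_nonneg_left hsumbound hc2) (le_of_eq ?_)
  have hn0 : (0:ℝ) < (n : ℝ) := by exact_mod_cast hn
  have hT0 : (0:ℝ) < (T : ℝ) := by exact_mod_cast hT
  have hsq : Real.sqrt (n : ℝ) ^ 2 = (n : ℝ) := Real.sq_sqrt hn0.le
  rw [hc, inv_pow, mul_pow, hsq]
  field_simp
end

section
/- Let (Ω, 𝓕, ℙ) be a probability space, let n, T ≥ 1 be integers, fix i ∈ {1,…,n}, and let ξ_{jt} : Ω → ℝ (j = 1,…,n; t = 1,…,T) be random variables with all fourth-order products integrable. Suppose: (a) for every j, E[ ( (1/T) ∑_{t=1}^T ( ξ_{it} ξ_{jt} − E[ξ_{it} ξ_{jt}] ) )² ] ≤ K / T; (b) for every t, ∑_{j=1}^n |E[ξ_{it} ξ_{jt}]| ≤ M; (c) |E[ξ_{is} ξ_{js}]| ≤ M₂ for all j and all s. Then, writing ξ_t = (ξ_{1t},…,ξ_{nt})ᵀ ∈ ℝⁿ, E[ ‖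 (1/(√n · T)) ∑_{t=1}^T ξ_{it} ξ_t ‖² ] ≤ 2K/T + 2 M M₂ / n, where ‖·‖ is the Euclidean norm on ℝⁿ. -/
open MeasureTheory

/-- Equations (A.1f2)–(A.1f3) in the proof of Proposition B.3(f): for a fixed series `i`,
under the fourth-cumulant bound `E[((1/T) ∑_t (ξ_{it}ξ_{jt} - E[ξ_{it}ξ_{jt}]))²] ≤ K/T`,
the cross-sectional covariance summability `∑_j |E[ξ_{it}ξ_{jt}]| ≤ M` for every `t`,
and the uniform covariance bound `|E[ξ_{is}ξ_{js}]| ≤ M₂`, the quadratic idiosyncratic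
cross term satisfies `E[‖(1/(√n T)) ∑_t ξ_{it} ξ_t‖²] ≤ 2K/T + 2 M M₂ / n`
(Euclidean norm on ℝⁿ). -/
theorem idiosyncratic_quadratic_cross_term_bound
    (Ω : Type*) [MeasurableSpace Ω] (P : Measure Ω) [IsProbabilityMeasure P]
    (n T : ℕ) (hn : 1 ≤ n) (hT : 1 ≤ T)
    (i : Fin n) (ξ : Fin n → Fin T → Ω → ℝ)
    (hint2 : ∀ (j : Fin n) (t s : Fin T), Integrable (fun ω => ξ i t ω * ξ j s ω) P)
    (hint4 : ∀ (j : Fin n) (t s : Fin T),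
      Integrable (fun ω => ξ i t ω * ξ j t ω * ξ i s ω * ξ j s ω) P)
    (K : ℝ)
    (ha : ∀ j : Fin n,
      ∫ ω, ((T : ℝ)⁻¹ * ∑ t, (ξ i t ω * ξ j t ω - ∫ ω', ξ i t ω' * ξ j t ω' ∂P)) ^ 2 ∂P
        ≤ K / T)
    (hintSq : ∀ j : Fin n,
      Integrable (fun ω =>
        ((T : ℝ)⁻¹ * ∑ t, (ξ i t ω * ξ j t ω - ∫ ω', ξ i t ω' * ξ j t ω' ∂P)) ^ 2) P)
    (M : ℝ) (hb : ∀ t : Fin T, ∑ j, |∫ ω, ξ i t ω * ξ j t ω ∂P| ≤ M)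
    (M₂ : ℝ) (hc : ∀ (j : Fin n) (s : Fin T), |∫ ω, ξ i s ω * ξ j s ω ∂P| ≤ M₂) :
    ∫ ω, ∑ j, ((Real.sqrt n * T)⁻¹ * ∑ t, ξ i t ω * ξ j t ω) ^ 2 ∂P
      ≤ 2 * K / T + 2 * M * M₂ / n := by
  have hT0 : (0:ℝ) < T := by exact_mod_cast hT
  have hn0 : (0:ℝ) < n := by exact_mod_cast hn
  set μ : Fin n → ℝ := fun j => (T:ℝ)⁻¹ * ∑ t, ∫ ω, ξ i t ω * ξ j t ω ∂P with hμdef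
  set S : Fin n → Ω → ℝ := fun j ω =>
    (T:ℝ)⁻¹ * ∑ t, (ξ i t ω * ξ j t ω - ∫ ω', ξ i t ω' * ξ j t ω' ∂P) with hSdef
  have hM₂ : 0 ≤ M₂ := le_trans (abs_nonneg _) (hc i ⟨0, hT⟩)
  -- pointwise identity
  have hid : ∀ j ω, ((Real.sqrt n * T)⁻¹ * ∑ t, ξ i t ω * ξ j t ω) ^ 2
      = (n:ℝ)⁻¹ * (S j ω + μ j) ^ 2 := by
    intro j ω
    have h1 : S j ω + μ j = (T:ℝ)⁻¹ * ∑ t, ξ i t ω * ξ j t ω := by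
      simp only [hSdef, hμdef, Finset.sum_sub_distrib]
      ring
    have h2 : ((Real.sqrt n)⁻¹) ^ 2 = (n:ℝ)⁻¹ := by
      rw [inv_pow, Real.sq_sqrt (Nat.cast_nonneg n)]
    rw [h1, mul_inv, mul_assoc, mul_pow, h2]
  -- integrability pieces
  have hSint : ∀ j, Integrable (S j) P := by
    intro j
    exact (integrable_finset_sum _ fun t _ => (hint2 j t t).sub (integrable_const _)).const_mul _
  have hSpInt : ∀ j, Integrable (fun ω => (S j ω + μ j) ^ 2) P := by
    intro j
    have : (fun ω => (S j ω + μ j) ^ 2)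
        = fun ω => (S j ω) ^ 2 + ((2 * μ j) * S j ω + (μ j) ^ 2) := by
      funext ω; ring
    rw [this]
    exact (hintSq j).add (((hSint j).const_mul _).add (integrable_const _))
  have hfint : ∀ j, Integrable
      (fun ω => ((Real.sqrt n * T)⁻¹ * ∑ t, ξ i t ω * ξ j t ω) ^ 2) P := by
    intro j
    have : (fun ω => ((Real.sqrt n * T)⁻¹ * ∑ t, ξ i t ω * ξ j t ω) ^ 2)
        = fun ω => (n:ℝ)⁻¹ * (S j ω + μ j) ^ 2 := funext fun ω => hid j ω
    rw [this]
    exact (hSpInt j).const_mul _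
  -- per-j bound
  have key : ∀ j, ∫ ω, ((Real.sqrt n * T)⁻¹ * ∑ t, ξ i t ω * ξ j t ω) ^ 2 ∂P
      ≤ (n:ℝ)⁻¹ * (2 * (K / T) + 2 * (μ j) ^ 2) := by
    intro j
    have e1 : ∫ ω, ((Real.sqrt n * T)⁻¹ * ∑ t, ξ i t ω * ξ j t ω) ^ 2 ∂P
        = (n:ℝ)⁻¹ * ∫ ω, (S j ω + μ j) ^ 2 ∂P := by
      simp_rw [hid]
      exact integral_const_mul _ _
    rw [e1]
    have h3 : ∫ ω, (S j ω + μ j) ^ 2 ∂P ≤ 2 * (K / T) + 2 * (μ j) ^ 2 := by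
      have hmono : ∫ ω, (S j ω + μ j) ^ 2 ∂P
          ≤ ∫ ω, (2 * (S j ω) ^ 2 + 2 * (μ j) ^ 2) ∂P := by
        refine integral_mono (hSpInt j) (((hintSq j).const_mul 2).add (integrable_const _)) ?_
        intro ω
        show (S j ω + μ j) ^ 2 ≤ 2 * (S j ω) ^ 2 + 2 * (μ j) ^ 2
        nlinarith [sq_nonneg (S j ω - μ j)]
      have hcalc : ∫ ω, (2 * (S j ω) ^ 2 + 2 * (μ j) ^ 2) ∂P
          = 2 * (∫ ω, (S j ω) ^ 2 ∂P) + 2 * (μ j) ^ 2 := by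
        rw [integral_add ((hintSq j).const_mul 2) (integrable_const _),
          integral_const_mul, integral_const]
        simp only [measure_univ, ENNReal.toReal_one, one_smul, probReal_univ]
        rfl
      have := ha j
      calc ∫ ω, (S j ω + μ j) ^ 2 ∂P
          ≤ 2 * (∫ ω, (S j ω) ^ 2 ∂P) + 2 * (μ j) ^ 2 := by rw [← hcalc]; exact hmono
        _ ≤ 2 * (K / T) + 2 * (μ j) ^ 2 := by linarith
    exact mul_le_mul_of_nonneg_left h3 (inv_nonneg.2 hn0.le)
  -- covariance sums
  have hμabs : ∀ j, |μ j| ≤ M₂ := by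
    intro j
    have : |∑ t, ∫ ω, ξ i t ω * ξ j t ω ∂P| ≤ (T:ℝ) * M₂ := by
      calc |∑ t, ∫ ω, ξ i t ω * ξ j t ω ∂P| ≤ ∑ t : Fin T, |∫ ω, ξ i t ω * ξ j t ω ∂P| :=
            Finset.abs_sum_le_sum_abs _ _
        _ ≤ ∑ _t : Fin T, M₂ := Finset.sum_le_sum fun t _ => hc j t
        _ = (T:ℝ) * M₂ := by simp [mul_comm]
    have h := abs_mul ((T:ℝ)⁻¹) (∑ t, ∫ ω, ξ i t ω * ξ j t ω ∂P)
    rw [hμdef]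
    simp only
    rw [h, abs_inv, abs_of_nonneg (le_of_lt hT0)]
    calc (T:ℝ)⁻¹ * |∑ t, ∫ ω, ξ i t ω * ξ j t ω ∂P| ≤ (T:ℝ)⁻¹ * ((T:ℝ) * M₂) := by
          exact mul_le_mul_of_nonneg_left this (by positivity)
      _ = M₂ := by field_simp
  have hμsum : ∑ j, |μ j| ≤ M := by
    calc ∑ j, |μ j| ≤ ∑ j, (T:ℝ)⁻¹ * ∑ t, |∫ ω, ξ i t ω * ξ j t ω ∂P| := by
          refine Finset.sum_le_sum fun j _ => ?_
          rw [hμdef]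
          simp only
          rw [abs_mul, abs_inv, abs_of_nonneg (le_of_lt hT0)]
          exact mul_le_mul_of_nonneg_left (Finset.abs_sum_le_sum_abs _ _) (by positivity)
      _ = (T:ℝ)⁻¹ * ∑ t : Fin T, ∑ j, |∫ ω, ξ i t ω * ξ j t ω ∂P| := by
          rw [← Finset.mul_sum, Finset.sum_comm]
      _ ≤ (T:ℝ)⁻¹ * ∑ _t : Fin T, M := by
          exact mul_le_mul_of_nonneg_left (Finset.sum_le_sum fun t _ => hb t) (by positivity)
      _ = M := by
          rw [Finset.sum_const]
          simp [Finset.card_univ]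
          field_simp
  have hsum : ∑ j, (μ j) ^ 2 ≤ M * M₂ := by
    calc ∑ j, (μ j) ^ 2 ≤ ∑ j, M₂ * |μ j| := by
          refine Finset.sum_le_sum fun j _ => ?_
          have : (μ j) ^ 2 = |μ j| * |μ j| := by rw [← sq_abs, sq]
          rw [this]
          exact mul_le_mul_of_nonneg_right (hμabs j) (abs_nonneg _)
      _ = M₂ * ∑ j, |μ j| := by rw [Finset.mul_sum]
      _ ≤ M₂ * M := mul_le_mul_of_nonneg_left hμsum hM₂
      _ = M * M₂ := mul_comm _ _
  -- put it together
  rw [integral_finset_sum _ fun j _ => hfint j]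
  calc ∑ j, ∫ ω, ((Real.sqrt n * T)⁻¹ * ∑ t, ξ i t ω * ξ j t ω) ^ 2 ∂P
      ≤ ∑ j, (n:ℝ)⁻¹ * (2 * (K / T) + 2 * (μ j) ^ 2) :=
        Finset.sum_le_sum fun j _ => key j
    _ = (n:ℝ) * ((n:ℝ)⁻¹ * (2 * (K / T))) + 2 * (n:ℝ)⁻¹ * ∑ j, (μ j) ^ 2 := by
        simp only [mul_add, Finset.sum_add_distrib, Finset.sum_const, Finset.card_univ,
          Fintype.card_fin, nsmul_eq_mul, ← Finset.mul_sum]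
        ring
    _ ≤ 2 * K / T + 2 * M * M₂ / n := by
        have hnn : (0:ℝ) ≤ 2 * (n:ℝ)⁻¹ :=
          mul_nonneg (by norm_num) (inv_nonneg.2 (Nat.cast_nonneg n))
        have h1 : (n:ℝ) * ((n:ℝ)⁻¹ * (2 * (K / T))) = 2 * K / T := by
          field_simp
        have h2 : 2 * (n:ℝ)⁻¹ * ∑ j, (μ j) ^ 2 ≤ 2 * (n:ℝ)⁻¹ * (M * M₂) :=
          mul_le_mul_of_nonneg_left hsum hnn
        have h3 : 2 * (n:ℝ)⁻¹ * (M * M₂) = 2 * M * M₂ / n := by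
          rw [div_eq_mul_inv]; ring
        linarith
end

section
/- Let (Ω, 𝓕, ℙ) be a probability space, let T, r ≥ 1 be integers, fix an index i, and let F_{jt} : Ω → ℝ (j = 1,…,r; t = 1,…,T) and ξ_{it} : Ω → ℝ (t = 1,…,T) be random variables with all fourth-order products integrable. Suppose: (a) E[ξ_{it} F_{jt} ξ_{is} F_{js}] = E[F_{jt} F_{js}] · E[ξ_{it} ξ_{is}] for all j, t, s; (b) |E[F_{jt} F_{js}]| ≤ M_F for all j, t, s; (c) ∑_{t=1}^T ∑_{s=1}^T |E[ξ_{it} ξ_{is}]| ≤ T · M₃. Then, writing F_t = (F_{1t},…,F_{rt})ᵀ ∈ ℝ^r, E[ ‖ (1/T) ∑_{t=1}^T ξ_{it} F_t ‖² ] ≤ r M_F M₃ / T, where ‖·‖ is the Euclidean norm on ℝ^r. -/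
open MeasureTheory

/-- Equation (A.1b3) in the proof of Proposition B.3(b): for a fixed series `i`, under
the factorization `E[ξ_{it} F_{jt} ξ_{is} F_{js}] = E[F_{jt}F_{js}] E[ξ_{it}ξ_{is}]`,
bounded factor second moments `|E[F_{jt}F_{js}]| ≤ M_F`, and summable idiosyncratic
autocovariances `∑_{t,s} |E[ξ_{it}ξ_{is}]| ≤ T M₃`, the factor–idiosyncratic cross term
satisfies `E[‖(1/T) ∑_t ξ_{it} F_t‖²] ≤ r M_F M₃ / T` (Euclidean norm on ℝ^r). -/
theorem single_series_factor_cross_term_bound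
    (Ω : Type*) [MeasurableSpace Ω] (P : Measure Ω) [IsProbabilityMeasure P]
    (T r : ℕ) (hT : 1 ≤ T) (hr : 1 ≤ r)
    (F : Fin r → Fin T → Ω → ℝ) (ξ : Fin T → Ω → ℝ)
    (hint4 : ∀ (j k : Fin r) (t s : Fin T),
      Integrable (fun ω => ξ t ω * F j t ω * ξ s ω * F k s ω) P)
    (hintF : ∀ (j k : Fin r) (t s : Fin T), Integrable (fun ω => F j t ω * F k s ω) P)
    (hintXi : ∀ t s : Fin T, Integrable (fun ω => ξ t ω * ξ s ω) P)
    (hfact : ∀ (j : Fin r) (t s : Fin T),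
      ∫ ω, ξ t ω * F j t ω * ξ s ω * F j s ω ∂P =
        (∫ ω, F j t ω * F j s ω ∂P) * (∫ ω, ξ t ω * ξ s ω ∂P))
    (M_F : ℝ) (hMF : ∀ (j : Fin r) (t s : Fin T), |∫ ω, F j t ω * F j s ω ∂P| ≤ M_F)
    (M₃ : ℝ) (hM3 : ∑ t, ∑ s, |∫ ω, ξ t ω * ξ s ω ∂P| ≤ (T : ℝ) * M₃) :
    ∫ ω, ∑ j, ((T : ℝ)⁻¹ * ∑ t, ξ t ω * F j t ω) ^ 2 ∂P
      ≤ (r : ℝ) * M_F * M₃ / T := by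
  have hTpos : (0:ℝ) < T := by exact_mod_cast hT
  have hMF0 : 0 ≤ M_F := le_trans (abs_nonneg _) (hMF ⟨0, hr⟩ ⟨0, hT⟩ ⟨0, hT⟩)
  -- pointwise rewrite of the integrand
  have hpt : ∀ ω, ∑ j, ((T : ℝ)⁻¹ * ∑ t, ξ t ω * F j t ω) ^ 2
      = ((T:ℝ)⁻¹)^2 * ∑ j : Fin r, ∑ t : Fin T, ∑ s : Fin T,
          ξ t ω * F j t ω * ξ s ω * F j s ω := by
    intro ω
    rw [Finset.mul_sum]
    refine Finset.sum_congr rfl fun j _ => ?_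
    rw [mul_pow, sq (∑ t, ξ t ω * F j t ω), Finset.sum_mul_sum]
    congr 1
    refine Finset.sum_congr rfl fun t _ => Finset.sum_congr rfl fun s _ => ?_
    ring
  simp_rw [hpt]
  rw [integral_const_mul]
  have hintsum : ∀ j : Fin r, ∀ t : Fin T, Integrable
      (fun ω => ∑ s : Fin T, ξ t ω * F j t ω * ξ s ω * F j s ω) P := by
    intro j t
    exact integrable_finset_sum _ fun s _ => hint4 j j t s
  rw [integral_finset_sum _ (fun j _ => integrable_finset_sum _ fun t _ => hintsum j t)]
  have hstep : ∀ j : Fin r,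
      ∫ ω, ∑ t : Fin T, ∑ s : Fin T, ξ t ω * F j t ω * ξ s ω * F j s ω ∂P
        ≤ M_F * ((T:ℝ) * M₃) := by
    intro j
    rw [integral_finset_sum _ (fun t _ => hintsum j t)]
    have : ∀ t : Fin T, ∫ ω, ∑ s : Fin T, ξ t ω * F j t ω * ξ s ω * F j s ω ∂P
        = ∑ s : Fin T, (∫ ω, F j t ω * F j s ω ∂P) * (∫ ω, ξ t ω * ξ s ω ∂P) := by
      intro t
      rw [integral_finset_sum _ (fun s _ => hint4 j j t s)]
      exact Finset.sum_congr rfl fun s _ => hfact j t s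
    simp_rw [this]
    calc ∑ t : Fin T, ∑ s : Fin T, (∫ ω, F j t ω * F j s ω ∂P) * (∫ ω, ξ t ω * ξ s ω ∂P)
        ≤ ∑ t : Fin T, ∑ s : Fin T, M_F * |∫ ω, ξ t ω * ξ s ω ∂P| := by
          refine Finset.sum_le_sum fun t _ => Finset.sum_le_sum fun s _ => ?_
          calc (∫ ω, F j t ω * F j s ω ∂P) * (∫ ω, ξ t ω * ξ s ω ∂P)
              ≤ |(∫ ω, F j t ω * F j s ω ∂P) * (∫ ω, ξ t ω * ξ s ω ∂P)| := le_abs_self _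
            _ = |∫ ω, F j t ω * F j s ω ∂P| * |∫ ω, ξ t ω * ξ s ω ∂P| := abs_mul _ _
            _ ≤ M_F * |∫ ω, ξ t ω * ξ s ω ∂P| :=
                mul_le_mul_of_nonneg_right (hMF j t s) (abs_nonneg _)
      _ = M_F * ∑ t : Fin T, ∑ s : Fin T, |∫ ω, ξ t ω * ξ s ω ∂P| := by
          rw [Finset.mul_sum]; exact Finset.sum_congr rfl fun t _ => (Finset.mul_sum _ _ _).symm
      _ ≤ M_F * ((T:ℝ) * M₃) := mul_le_mul_of_nonneg_left hM3 hMF0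
  calc ((T:ℝ)⁻¹)^2 * ∑ j : Fin r,
        ∫ ω, ∑ t : Fin T, ∑ s : Fin T, ξ t ω * F j t ω * ξ s ω * F j s ω ∂P
      ≤ ((T:ℝ)⁻¹)^2 * ∑ j : Fin r, M_F * ((T:ℝ) * M₃) := by
        refine mul_le_mul_of_nonneg_left (Finset.sum_le_sum fun j _ => hstep j) (by positivity)
    _ = (r : ℝ) * M_F * M₃ / T := by
        rw [Finset.sum_const, Finset.card_univ, Fintype.card_fin, nsmul_eq_mul]
        field_simp
end
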